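/- arXiv:1610.00176 — 5 statements merged into one kernel-verified Lean document; each statement's English description precedes it below -/
import Mathlib

section
/- Let m ≥ 1 and 1 ≤ c ≤ n. Then I_c^{(m)} = I_c^m + M, where M is the ideal of R generated by all monomials x_0^{a_0}x_1^{a_1}⋯x_n^{a_n} such that (1) for every subset S ⊆ {0,1,…,n} with |S| = c one has Σ_{i∈S} a_i ≥ m, and (2) the support {i : a_i > 0} has cardinality at least n − c + 3. -/
open MvPolynomial

/-- The ideal generated by the variables `x_i` for `i ∈ S`. -/
noncomputable def varIdeal (k : Type*) [Field k] (n : ℕ) (S : Finset (Fin (n + 1))) :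
    Ideal (MvPolynomial (Fin (n + 1)) k) :=
  Ideal.span ((fun i => (X i : MvPolynomial (Fin (n + 1)) k)) '' ↑S)

/-- The monomial star configuration ideal `I_c = ⋂_{|S| = c} P_S`. -/
noncomputable def monStar (k : Type*) [Field k] (n c : ℕ) :
    Ideal (MvPolynomial (Fin (n + 1)) k) :=
  ⨅ (S : Finset (Fin (n + 1))) (_ : S.card = c), varIdeal k n S

/-- The `m`-th symbolic power `I_c^{(m)} = ⋂_{|S| = c} (P_S)^m`. -/
noncomputable def monStarSymb (k : Type*) [Field k] (n c m : ℕ) :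
    Ideal (MvPolynomial (Fin (n + 1)) k) :=
  ⨅ (S : Finset (Fin (n + 1))) (_ : S.card = c), (varIdeal k n S) ^ m

lemma single_sum_apply {n : ℕ} (s : Finset (Fin (n + 1))) (m : ℕ) (i : Fin (n + 1)) :
    (∑ j ∈ s, Finsupp.single j m) i = if i ∈ s then m else 0 := by
  rw [Finsupp.finset_sum_apply]
  simp only [Finsupp.single_apply]
  rw [Finset.sum_ite_eq' s i fun _ => m]

lemma mem_varIdeal_pow {k : Type*} [Field k] {n : ℕ} (S : Finset (Fin (n + 1))) (m : ℕ)
    (a : Fin (n + 1) →₀ ℕ) (h : m ≤ ∑ i ∈ S, a i) :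
    monomial a (1 : k) ∈ varIdeal k n S ^ m := by
  induction m generalizing a with
  | zero => simp
  | succ m ih =>
    have hpos : 0 < ∑ i ∈ S, a i := lt_of_lt_of_le (Nat.succ_pos m) h
    obtain ⟨j, hjS, hja⟩ : ∃ j ∈ S, a j ≠ 0 := by
      by_contra hcon
      push_neg at hcon
      rw [Finset.sum_eq_zero hcon] at hpos
      exact lt_irrefl 0 hpos
    have hle : Finsupp.single j 1 ≤ a := by
      rw [Finsupp.single_le_iff]
      omega
    set a' := a - Finsupp.single j 1 with ha'
    have hadd : a' + Finsupp.single j 1 = a := tsub_add_cancel_of_le hle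
    have hsum1 : ∑ i ∈ S, (Finsupp.single j 1 : Fin (n + 1) →₀ ℕ) i = 1 := by
      simp only [Finsupp.single_apply]
      rw [Finset.sum_ite_eq S j fun _ => 1, if_pos hjS]
    have hsum : ∑ i ∈ S, a i = ∑ i ∈ S, a' i + 1 := by
      calc ∑ i ∈ S, a i
          = ∑ i ∈ S, (a' i + (Finsupp.single j 1 : Fin (n + 1) →₀ ℕ) i) :=
            Finset.sum_congr rfl fun i _ => by rw [← hadd]; rfl
        _ = ∑ i ∈ S, a' i + ∑ i ∈ S, (Finsupp.single j 1 : Fin (n + 1) →₀ ℕ) i :=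
            Finset.sum_add_distrib
        _ = ∑ i ∈ S, a' i + 1 := by rw [hsum1]
    have hm : m ≤ ∑ i ∈ S, a' i := by omega
    have heq : monomial a (1 : k) = monomial a' 1 * X j := by
      rw [X, monomial_mul, mul_one, hadd]
    rw [heq, pow_succ]
    exact Ideal.mul_mem_mul (ih a' hm) (Ideal.subset_span ⟨j, hjS, rfl⟩)

lemma varIdeal_pow_le_span {k : Type*} [Field k] {n : ℕ} (S : Finset (Fin (n + 1))) (m : ℕ) :
    varIdeal k n S ^ m ≤
      Ideal.span ((fun s => monomial s (1 : k)) '' {μ | m ≤ ∑ i ∈ S, μ i}) := by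
  induction m with
  | zero =>
    intro p _
    have h1 : (1 : MvPolynomial (Fin (n + 1)) k) ∈
        Ideal.span ((fun s => monomial s (1 : k)) '' {μ | 0 ≤ ∑ i ∈ S, μ i}) := by
      have : (1 : MvPolynomial (Fin (n + 1)) k) = monomial 0 1 := by simp
      rw [this]
      exact Ideal.subset_span ⟨0, by simp, rfl⟩
    simpa using Ideal.mul_mem_left _ p h1
  | succ m ih =>
    calc varIdeal k n S ^ (m + 1) = varIdeal k n S ^ m * varIdeal k n S := pow_succ _ _
      _ ≤ Ideal.span ((fun s => monomial s (1 : k)) '' {μ | m ≤ ∑ i ∈ S, μ i}) *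
            varIdeal k n S := Ideal.mul_mono ih le_rfl
      _ ≤ Ideal.span ((fun s => monomial s (1 : k)) '' {μ | m + 1 ≤ ∑ i ∈ S, μ i}) := by
          rw [varIdeal, Ideal.span_mul_span']
          refine Ideal.span_le.2 ?_
          rintro x hx
          obtain ⟨g, hg, v, hv, rfl⟩ := Set.mem_mul.1 hx
          obtain ⟨μ, hμ, rfl⟩ := hg
          obtain ⟨i, hi, rfl⟩ := hv
          have hi' : i ∈ S := hi
          have heq : monomial μ (1 : k) * X i = monomial (μ + Finsupp.single i 1) 1 := by
            rw [X, monomial_mul, mul_one]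
          have hmem : (μ + Finsupp.single i 1)
              ∈ {ν : Fin (n + 1) →₀ ℕ | m + 1 ≤ ∑ j ∈ S, ν j} := by
            have hsum1 : ∑ j ∈ S, (Finsupp.single i 1 : Fin (n + 1) →₀ ℕ) j = 1 := by
              simp only [Finsupp.single_apply]
              rw [Finset.sum_ite_eq S i fun _ => 1, if_pos hi']
            have hds : ∑ j ∈ S, ((μ + Finsupp.single i 1 : Fin (n + 1) →₀ ℕ)) j
                = ∑ j ∈ S, μ j + ∑ j ∈ S, (Finsupp.single i 1 : Fin (n + 1) →₀ ℕ) j := by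
              rw [← Finset.sum_add_distrib]; rfl
            simp only [Set.mem_setOf_eq] at hμ ⊢
            omega
          show monomial μ (1 : k) * X i ∈ _
          rw [heq]
          exact Ideal.subset_span (Set.mem_image_of_mem _ hmem)

lemma mem_varIdeal_pow_iff {k : Type*} [Field k] {n : ℕ} (S : Finset (Fin (n + 1))) (m : ℕ)
    (p : MvPolynomial (Fin (n + 1)) k) :
    p ∈ varIdeal k n S ^ m ↔ ∀ xi ∈ p.support, m ≤ ∑ i ∈ S, xi i := by
  constructor
  · intro hp
    have := varIdeal_pow_le_span S m hp
    rw [mem_ideal_span_monomial_image] at this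
    intro xi hxi
    obtain ⟨si, hsi, hle⟩ := this xi hxi
    exact hsi.trans (Finset.sum_le_sum fun i _ => hle i)
  · intro h
    have hp : p ∈ Ideal.span ((fun s => monomial s (1 : k)) '' {μ | m ≤ ∑ i ∈ S, μ i}) :=
      mem_ideal_span_monomial_image.2 fun xi hxi => ⟨xi, h xi hxi, le_rfl⟩
    refine Ideal.span_le.2 ?_ hp
    rintro q ⟨μ, hμ, rfl⟩
    exact mem_varIdeal_pow S m μ hμ

theorem symbolic_power_decomposition (k : Type*) [Field k] (n c m : ℕ)
    (hn : 1 ≤ n) (hc : 1 ≤ c) (hcn : c ≤ n) (hm : 1 ≤ m) :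
    monStarSymb k n c m =
      monStar k n c ^ m +
        Ideal.span {p : MvPolynomial (Fin (n + 1)) k |
          ∃ a : Fin (n + 1) →₀ ℕ, p = monomial a (1 : k) ∧
            (∀ S : Finset (Fin (n + 1)), S.card = c → m ≤ ∑ i ∈ S, a i) ∧
            n - c + 3 ≤ a.support.card} := by
  apply le_antisymm
  · intro p hp
    have hp' : ∀ xi ∈ p.support, ∀ S : Finset (Fin (n + 1)), S.card = c →
        m ≤ ∑ i ∈ S, xi i := by
      intro xi hxi S hS
      have h1 : p ∈ varIdeal k n S ^ m :=
        Submodule.mem_iInf _ |>.1 (Submodule.mem_iInf _ |>.1 hp S) hS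
      exact (mem_varIdeal_pow_iff S m p).1 h1 xi hxi
    nth_rewrite 1 [as_sum p]
    apply Ideal.sum_mem
    intro a ha
    have hA : ∀ S : Finset (Fin (n + 1)), S.card = c → m ≤ ∑ i ∈ S, a i :=
      fun S hS => hp' a ha S hS
    have hmono : monomial a (1 : k) ∈
        monStar k n c ^ m +
          Ideal.span {p : MvPolynomial (Fin (n + 1)) k |
            ∃ b : Fin (n + 1) →₀ ℕ, p = monomial b (1 : k) ∧
              (∀ S : Finset (Fin (n + 1)), S.card = c → m ≤ ∑ i ∈ S, b i) ∧
              n - c + 3 ≤ b.support.card} := by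
      by_cases hcard : n - c + 3 ≤ a.support.card
      · exact Submodule.mem_sup_right (Ideal.subset_span ⟨a, rfl, hA, hcard⟩)
      · push_neg at hcard
        have hlb : n - c + 2 ≤ a.support.card := by
          by_contra hcon
          push_neg at hcon
          have hcompl : c ≤ a.supportᶜ.card := by
            rw [Finset.card_compl, Fintype.card_fin]
            omega
          obtain ⟨S, hSsub, hScard⟩ := Finset.exists_subset_card_eq hcompl
          have h0 : ∑ i ∈ S, a i = 0 := Finset.sum_eq_zero fun i hi => by
            have := hSsub hi
            rw [Finset.mem_compl, Finsupp.mem_support_iff, not_not] at this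
            exact this
          have := hA S hScard
          omega
        have hcard2 : a.support.card = n - c + 2 := by omega
        have hbig : ∀ i ∈ a.support, m ≤ a i := by
          intro i hi
          have hiS : i ∉ a.supportᶜ := by simpa using hi
          have hccompl : a.supportᶜ.card = c - 1 := by
            rw [Finset.card_compl, Fintype.card_fin, hcard2]
            omega
          have hScard : (insert i a.supportᶜ).card = c := by
            rw [Finset.card_insert_of_notMem hiS, hccompl]
            omega
          have h1 := hA _ hScard
          rw [Finset.sum_insert hiS] at h1
          have h0 : ∑ j ∈ a.supportᶜ, a j = 0 := Finset.sum_eq_zero fun j hj => by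
            have := Finset.mem_compl.1 hj
            rw [Finsupp.mem_support_iff, not_not] at this
            exact this
          omega
        refine Submodule.mem_sup_left ?_
        have hprod : (∏ i ∈ a.support, X i : MvPolynomial (Fin (n + 1)) k) ∈
            monStar k n c := by
          refine Submodule.mem_iInf _ |>.2 fun S => Submodule.mem_iInf _ |>.2 fun hS => ?_
          have hne : (a.support ∩ S).Nonempty := by
            rw [← Finset.card_pos]
            have h1 := Finset.card_union_add_card_inter a.support S
            have h2 : (a.support ∪ S).card ≤ n + 1 := by
              have := Finset.card_le_univ (a.support ∪ S)
              simpa [Fintype.card_fin] using this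
            omega
          obtain ⟨j, hj⟩ := hne
          rw [Finset.mem_inter] at hj
          rw [← Finset.mul_prod_erase _ _ hj.1]
          exact Ideal.mul_mem_right _ _ (Ideal.subset_span ⟨j, hj.2, rfl⟩)
        set b : Fin (n + 1) →₀ ℕ := ∑ i ∈ a.support, Finsupp.single i m with hb
        have hble : b ≤ a := by
          rw [Finsupp.le_def]
          intro i
          rw [hb, single_sum_apply]
          split
          · exact hbig i ‹_›
          · exact Nat.zero_le _
        have hfac : monomial a (1 : k)
            = monomial (a - b) 1 * (∏ i ∈ a.support, X i) ^ m := by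
          rw [← Finset.prod_pow]
          simp_rw [X_pow_eq_monomial]
          have : ∏ i ∈ a.support, (monomial (Finsupp.single i m) (1 : k))
              = monomial b 1 := by
            rw [hb, monomial_sum_index, map_one, one_mul]
          rw [this, monomial_mul, mul_one, tsub_add_cancel_of_le hble]
        rw [hfac]
        exact Ideal.mul_mem_left _ _ (Ideal.pow_mem_pow hprod m)
    have hcm : monomial a (coeff a p) = C (coeff a p) * monomial a (1 : k) := by
      rw [C_mul_monomial, mul_one]
    rw [hcm]
    exact Ideal.mul_mem_left _ _ hmono
  · rw [Submodule.add_eq_sup]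
    apply sup_le
    · refine le_iInf fun S => le_iInf fun hS => ?_
      exact Ideal.pow_right_mono (iInf_le_of_le S (iInf_le _ hS)) m
    · refine Ideal.span_le.2 ?_
      rintro q ⟨a, rfl, hA, -⟩
      exact Submodule.mem_iInf _ |>.2 fun S => Submodule.mem_iInf _ |>.2 fun hS =>
        mem_varIdeal_pow S m a (hA S hS)
end

section
/- Let 3 ≤ c ≤ n. Then the symbolic cube of the monomial star configuration ideal decomposes as I_c^{(3)} = I_{c−2} + I_{c−1}·I_c + I_c^3. -/
open MvPolynomial Pointwise

section Aux

variable (k : Type*) [Field k] (n : ℕ)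

/-- The monomial ideal spanned by a set of exponents. -/
noncomputable def Mspan (A : Set (Fin (n + 1) →₀ ℕ)) : Ideal (MvPolynomial (Fin (n + 1)) k) :=
  Ideal.span ((fun a => (monomial a (1 : k) : MvPolynomial (Fin (n + 1)) k)) '' A)

lemma Mspan_mul (A B : Set (Fin (n + 1) →₀ ℕ)) :
    Mspan k n A * Mspan k n B = Mspan k n (Set.image2 (· + ·) A B) := by
  unfold Mspan
  rw [Ideal.span_mul_span', ← Set.image2_mul, Set.image2_image_left, Set.image2_image_right]
  congr 1
  simp only [monomial_mul, one_mul]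
  exact (Set.image_image2 (· + ·) (fun a => (monomial a (1 : k) : MvPolynomial (Fin (n + 1)) k))).symm

lemma Mspan_add (A B : Set (Fin (n + 1) →₀ ℕ)) :
    Mspan k n A + Mspan k n B = Mspan k n (A ∪ B) := by
  unfold Mspan
  rw [Set.image_union, Ideal.span_union, Submodule.add_eq_sup]

lemma mem_Mspan (A : Set (Fin (n + 1) →₀ ℕ)) (p : MvPolynomial (Fin (n + 1)) k) :
    p ∈ Mspan k n A ↔ ∀ d ∈ p.support, ∃ a ∈ A, a ≤ d :=
  mem_ideal_span_monomial_image

/-- Exponents supported in `S` with total degree `m`. -/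
def Tset (S : Finset (Fin (n + 1))) (m : ℕ) : Set (Fin (n + 1) →₀ ℕ) :=
  {a | ↑a.support ⊆ (S : Set (Fin (n + 1))) ∧ ∑ i ∈ S, a i = m}

lemma single_mem_Tset {S : Finset (Fin (n + 1))} {i : Fin (n + 1)} (hi : i ∈ S) :
    (Finsupp.single i 1 : Fin (n + 1) →₀ ℕ) ∈ Tset n S 1 := by
  constructor
  · intro j hj
    have h := Finsupp.support_single_subset (Finset.mem_coe.1 hj)
    rw [Finset.mem_singleton] at h
    subst h
    exact hi
  · rw [Finset.sum_eq_single i (fun b _ hb => Finsupp.single_eq_of_ne' (Ne.symm hb))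
      (fun h => absurd hi h)]
    simp

lemma varIdeal_eq (S : Finset (Fin (n + 1))) : varIdeal k n S = Mspan k n (Tset n S 1) := by
  unfold varIdeal Mspan
  congr 1
  ext p
  constructor
  · rintro ⟨i, hi, rfl⟩
    exact ⟨Finsupp.single i 1, single_mem_Tset n hi, rfl⟩
  · rintro ⟨a, ⟨hsupp, hsum⟩, rfl⟩
    have hne : ∃ i ∈ S, a i ≠ 0 := by
      by_contra h
      push_neg at h
      rw [Finset.sum_eq_zero h] at hsum
      exact one_ne_zero hsum.symm
    obtain ⟨i, hiS, hia⟩ := hne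
    have hrest : ∑ j ∈ S.erase i, a j + a i = 1 := by
      rw [Finset.sum_erase_add S _ hiS]; exact hsum
    have hai : a i = 1 := by omega
    have hzero : ∀ j ∈ S.erase i, a j = 0 := by
      intro j hj
      have h4 : a j ≤ ∑ x ∈ S.erase i, a x :=
        Finset.single_le_sum (f := fun x => a x) (fun _ _ => Nat.zero_le _) hj
      omega
    have heq : a = Finsupp.single i 1 := by
      ext j
      rcases eq_or_ne j i with rfl | hji
      · simp [hai]
      · rw [Finsupp.single_eq_of_ne' (Ne.symm hji)]
        by_cases hjS : j ∈ S
        · exact hzero j (Finset.mem_erase.2 ⟨hji, hjS⟩)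
        · by_contra h
          exact hjS (hsupp (Finsupp.mem_support_iff.2 h))
    exact ⟨i, hiS, by rw [heq]; rfl⟩

lemma sum_tsub_single {S : Finset (Fin (n + 1))} {a : Fin (n + 1) →₀ ℕ} {i : Fin (n + 1)}
    (hiS : i ∈ S) (hia : a i ≠ 0) :
    ∑ j ∈ S, (a - Finsupp.single i 1 : Fin (n + 1) →₀ ℕ) j = (∑ j ∈ S, a j) - 1 := by
  set b : Fin (n + 1) →₀ ℕ := a - Finsupp.single i 1 with hb
  have h1 : ∀ j ∈ S.erase i, b j = a j := by
    intro j hj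
    rw [hb, Finsupp.tsub_apply, Finsupp.single_eq_of_ne' (Ne.symm (Finset.mem_erase.1 hj).1)]
    omega
  have h2 : b i = a i - 1 := by
    rw [hb, Finsupp.tsub_apply, Finsupp.single_eq_same]
  have e1 : ∑ j ∈ S.erase i, b j + b i = ∑ j ∈ S, b j := Finset.sum_erase_add S _ hiS
  have e2 : ∑ j ∈ S.erase i, a j + a i = ∑ j ∈ S, a j := Finset.sum_erase_add S _ hiS
  have h1' : ∑ j ∈ S.erase i, b j = ∑ j ∈ S.erase i, a j := Finset.sum_congr rfl h1
  omega

lemma Tset_add (S : Finset (Fin (n + 1))) (m : ℕ) :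
    Set.image2 (· + ·) (Tset n S 1) (Tset n S m) = Tset n S (m + 1) := by
  ext a
  constructor
  · rintro ⟨b, ⟨hb1, hb2⟩, c, ⟨hc1, hc2⟩, rfl⟩
    constructor
    · intro j hj
      simp only [Finset.mem_coe, Finsupp.mem_support_iff, Finsupp.add_apply] at hj
      rcases Nat.eq_zero_or_pos (b j) with h | h
      · exact hc1 (Finsupp.mem_support_iff.2 (by omega))
      · exact hb1 (Finsupp.mem_support_iff.2 (by omega))
    · simp only [Finsupp.add_apply, Finset.sum_add_distrib, hb2, hc2]
      omega
  · rintro ⟨h1, h2⟩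
    have hne : ∃ i ∈ S, a i ≠ 0 := by
      by_contra h
      push_neg at h
      rw [Finset.sum_eq_zero h] at h2
      omega
    obtain ⟨i, hiS, hia⟩ := hne
    refine ⟨Finsupp.single i 1, single_mem_Tset n hiS,
      (a - Finsupp.single i 1 : Fin (n + 1) →₀ ℕ), ⟨?_, ?_⟩, ?_⟩
    · exact fun j hj => h1 (Finsupp.support_tsub hj)
    · rw [sum_tsub_single n hiS hia, h2]
      omega
    · ext j
      rw [Finsupp.add_apply, Finsupp.tsub_apply]
      rcases eq_or_ne j i with rfl | hji
      · rw [Finsupp.single_eq_same]; omega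
      · rw [Finsupp.single_eq_of_ne' (Ne.symm hji)]; omega

lemma varIdeal_pow (S : Finset (Fin (n + 1))) (m : ℕ) :
    (varIdeal k n S) ^ m = Mspan k n (Tset n S m) := by
  induction m with
  | zero =>
    rw [pow_zero]
    have hT : Tset n S 0 = {0} := by
      ext a
      simp only [Tset, Set.mem_setOf_eq, Set.mem_singleton_iff]
      constructor
      · rintro ⟨h1, h2⟩
        ext j
        by_cases hj : j ∈ S
        · have := (Finset.sum_eq_zero_iff).1 h2 j hj
          simpa using this
        · by_contra h
          exact hj (h1 (Finsupp.mem_support_iff.2 (by simpa using h)))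
      · rintro rfl
        simp
    rw [hT]
    unfold Mspan
    rw [Set.image_singleton]
    have h1 : (monomial (0 : Fin (n + 1) →₀ ℕ) (1 : k) : MvPolynomial (Fin (n + 1)) k) = 1 := by
      simp
    rw [h1, Ideal.span_singleton_one, Ideal.one_eq_top]
  | succ m ih =>
    rw [pow_succ, ih, mul_comm, varIdeal_eq, Mspan_mul, Tset_add]

lemma exists_le_Tset {S : Finset (Fin (n + 1))} {d : Fin (n + 1) →₀ ℕ} :
    ∀ m, m ≤ ∑ i ∈ S, d i → ∃ a ∈ Tset n S m, a ≤ d := by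
  intro m
  induction m generalizing d with
  | zero => intro _; exact ⟨0, by simp [Tset], zero_le⟩
  | succ m ih =>
    intro hm
    have hne : ∃ i ∈ S, d i ≠ 0 := by
      by_contra h
      push_neg at h
      rw [Finset.sum_eq_zero h] at hm
      omega
    obtain ⟨i, hiS, hid⟩ := hne
    have hsum : m ≤ ∑ j ∈ S, (d - Finsupp.single i 1 : Fin (n + 1) →₀ ℕ) j := by
      rw [sum_tsub_single n hiS hid]; omega
    obtain ⟨a, ⟨ha1, ha2⟩, ha3⟩ := ih hsum
    refine ⟨a + Finsupp.single i 1, ⟨?_, ?_⟩, ?_⟩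
    · intro j hj
      simp only [Finset.mem_coe, Finsupp.mem_support_iff, Finsupp.add_apply] at hj
      rcases Nat.eq_zero_or_pos (a j) with h | h
      · have h5 : Finsupp.single i 1 j ≠ 0 := by omega
        rw [Finsupp.single_apply_ne_zero] at h5
        simpa [h5.1] using hiS
      · exact ha1 (Finsupp.mem_support_iff.2 (by omega))
    · have h6 : ∑ j ∈ S, Finsupp.single i (1 : ℕ) j = 1 := by
        rw [Finset.sum_eq_single i (fun b _ hb => Finsupp.single_eq_of_ne' (Ne.symm hb))
          (fun h => absurd hiS h)]
        simp
      simp only [Finsupp.add_apply]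
      rw [Finset.sum_add_distrib]
      omega
    · rw [Finsupp.le_def]
      intro j
      have h7 : a j ≤ (d - Finsupp.single i 1 : Fin (n + 1) →₀ ℕ) j := Finsupp.le_def.1 ha3 j
      rw [Finsupp.tsub_apply] at h7
      rw [Finsupp.add_apply]
      rcases eq_or_ne j i with rfl | hji
      · rw [Finsupp.single_eq_same] at *; omega
      · rw [Finsupp.single_eq_of_ne' (Ne.symm hji)] at *; omega

lemma mem_varIdeal_pow_s3 {S : Finset (Fin (n + 1))} {p : MvPolynomial (Fin (n + 1)) k} {m : ℕ} :
    p ∈ (varIdeal k n S) ^ m ↔ ∀ d ∈ p.support, m ≤ ∑ i ∈ S, d i := by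
  rw [varIdeal_pow, mem_Mspan]
  refine forall₂_congr fun d _ => ⟨?_, fun h => exists_le_Tset n m h⟩
  rintro ⟨a, ⟨ha1, ha2⟩, ha3⟩
  calc m = ∑ i ∈ S, a i := ha2.symm
    _ ≤ ∑ i ∈ S, d i := Finset.sum_le_sum fun i _ => Finsupp.le_def.1 ha3 i

/-- Exponents whose support has at least `n + 2 - t` elements. -/
def Gset (t : ℕ) : Set (Fin (n + 1) →₀ ℕ) := {a | n + 2 ≤ a.support.card + t}

lemma monStar_eq {t : ℕ} (ht : t ≤ n + 1) : monStar k n t = Mspan k n (Gset n t) := by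
  apply le_antisymm
  · intro p hp
    rw [mem_Mspan]
    intro d hd
    refine ⟨d, ?_, le_refl d⟩
    by_contra hcard
    simp only [Gset, Set.mem_setOf_eq, not_le] at hcard
    have hZ : t ≤ d.supportᶜ.card := by
      rw [Finset.card_compl, Fintype.card_fin]
      omega
    obtain ⟨S, hSZ, hScard⟩ := Finset.exists_subset_card_eq hZ
    simp only [monStar, Ideal.mem_iInf] at hp
    have hpS : p ∈ varIdeal k n S := hp S hScard
    rw [varIdeal, show ((fun i => (X i : MvPolynomial (Fin (n+1)) k)) '' ↑S) =
      (X '' ↑S) from rfl, mem_ideal_span_X_image] at hpS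
    obtain ⟨i, hiS, hid⟩ := hpS d hd
    have hmem : i ∈ d.supportᶜ := hSZ hiS
    rw [Finset.mem_compl, Finsupp.notMem_support_iff] at hmem
    exact hid hmem
  · rw [monStar]
    refine le_iInf fun S => le_iInf fun hS => ?_
    rw [Mspan, Ideal.span_le]
    rintro q ⟨a, ha, rfl⟩
    have hinter : (a.support ∩ S).Nonempty := by
      rw [← Finset.card_pos]
      have h1 := Finset.card_union_add_card_inter a.support S
      have h2 : (a.support ∪ S).card ≤ n + 1 := by
        have h3 := Finset.card_le_univ (a.support ∪ S)
        rwa [Fintype.card_fin] at h3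
      simp only [Gset, Set.mem_setOf_eq] at ha
      omega
    obtain ⟨i, hi⟩ := hinter
    rw [Finset.mem_inter] at hi
    rw [SetLike.mem_coe, varIdeal, show ((fun i => (X i : MvPolynomial (Fin (n+1)) k)) '' ↑S) =
      (X '' ↑S) from rfl, mem_ideal_span_X_image]
    intro m hm
    have hm2 := support_monomial_subset hm
    rw [Finset.mem_singleton] at hm2
    subst hm2
    exact ⟨i, hi.2, Finsupp.mem_support_iff.1 hi.1⟩

end Aux

section Comb

variable {n c : ℕ}

/-- Indicator finsupp of a finset, with value 1. -/
def indF {n : ℕ} (F : Finset (Fin (n + 1))) : Fin (n + 1) →₀ ℕ :=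
  ⟨F, fun j => if j ∈ F then 1 else 0, fun j => by simp⟩

lemma indF_apply {F : Finset (Fin (n + 1))} (j : Fin (n + 1)) :
    indF F j = if j ∈ F then 1 else 0 := rfl

lemma indF_support {F : Finset (Fin (n + 1))} : (indF F).support = F := rfl

lemma sum_finsupp_add (S : Finset (Fin (n + 1))) (b e : Fin (n + 1) →₀ ℕ) :
    ∑ i ∈ S, (b + e) i = (∑ i ∈ S, b i) + ∑ i ∈ S, e i := by
  simp [Finsupp.add_apply, Finset.sum_add_distrib]

lemma gset_sum_lb {a : Fin (n + 1) →₀ ℕ} {t : ℕ} (ha : a ∈ Gset n t)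
    {S : Finset (Fin (n + 1))} (hS : S.card = c) : c + 1 ≤ (∑ i ∈ S, a i) + t := by
  simp only [Gset, Set.mem_setOf_eq] at ha
  have h1 := Finset.card_union_add_card_inter a.support S
  have h2 : (a.support ∪ S).card ≤ n + 1 := by
    have h3 := Finset.card_le_univ (a.support ∪ S)
    rwa [Fintype.card_fin] at h3
  have h3 : (a.support ∩ S).card ≤ ∑ i ∈ S, a i := by
    calc (a.support ∩ S).card = ∑ i ∈ a.support ∩ S, 1 := by rw [Finset.card_eq_sum_ones]
      _ ≤ ∑ i ∈ a.support ∩ S, a i := Finset.sum_le_sum fun i hi => by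
          have h4 := Finsupp.mem_support_iff.1 (Finset.mem_inter.1 hi).1
          omega
      _ ≤ ∑ i ∈ S, a i := Finset.sum_le_sum_of_subset Finset.inter_subset_right
  omega

/-- The union of exponent sets corresponding to the right-hand side. -/
def Uset (n c : ℕ) : Set (Fin (n + 1) →₀ ℕ) :=
  (Gset n (c - 2) ∪ Set.image2 (· + ·) (Gset n (c - 1)) (Gset n c)) ∪
    Set.image2 (· + ·) (Set.image2 (· + ·) (Gset n c) (Gset n c)) (Gset n c)

lemma back (hc : 3 ≤ c) {d a : Fin (n + 1) →₀ ℕ} (haU : a ∈ Uset n c) (had : a ≤ d)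
    {S : Finset (Fin (n + 1))} (hS : S.card = c) : 3 ≤ ∑ i ∈ S, d i := by
  have hmono : ∑ i ∈ S, a i ≤ ∑ i ∈ S, d i :=
    Finset.sum_le_sum fun i _ => Finsupp.le_def.1 had i
  rcases haU with (ha | ⟨b, hb, e, he, rfl⟩) | ⟨f, ⟨b, hb, e, he, rfl⟩, g, hg, rfl⟩
  · have := gset_sum_lb ha hS
    omega
  · have h1 := gset_sum_lb hb hS
    have h2 := gset_sum_lb he hS
    rw [sum_finsupp_add] at hmono
    omega
  · have h1 := gset_sum_lb hb hS
    have h2 := gset_sum_lb he hS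
    have h3 := gset_sum_lb hg hS
    rw [sum_finsupp_add, sum_finsupp_add] at hmono
    omega

lemma fwd (hc : 3 ≤ c) (hcn : c ≤ n) {d : Fin (n + 1) →₀ ℕ}
    (h : ∀ S : Finset (Fin (n + 1)), S.card = c → 3 ≤ ∑ i ∈ S, d i) :
    ∃ a ∈ Uset n c, a ≤ d := by
  set s := d.support.card with hs
  have hsn : s ≤ n + 1 := by
    have h3 := Finset.card_le_univ d.support
    rwa [Fintype.card_fin] at h3
  have hz0 : n + 2 ≤ s + c := by
    by_contra hcon
    push_neg at hcon
    have hZ : c ≤ d.supportᶜ.card := by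
      rw [Finset.card_compl, Fintype.card_fin]
      omega
    obtain ⟨S, hSZ, hScard⟩ := Finset.exists_subset_card_eq hZ
    have h3 := h S hScard
    have h4 : ∑ i ∈ S, d i = 0 := Finset.sum_eq_zero fun i hi => by
      have h5 := hSZ hi
      rw [Finset.mem_compl, Finsupp.notMem_support_iff] at h5
      exact h5
    omega
  have hcases : s + c = n + 2 ∨ s + c = n + 3 ∨ n + 4 ≤ s + c := by omega
  rcases hcases with hcase | hcase | hcase
  · -- all entries of the support are ≥ 3; use the triple product part
    have h3all : ∀ i ∈ d.support, 3 ≤ d i := by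
      intro i hi
      have hdisj : Disjoint d.supportᶜ {i} := by
        simp [Finset.disjoint_singleton_right, hi]
      have hcard : (d.supportᶜ ∪ {i}).card = c := by
        rw [Finset.card_union_of_disjoint hdisj, Finset.card_compl, Fintype.card_fin,
          Finset.card_singleton]
        omega
      have h6 := h _ hcard
      rw [Finset.sum_union hdisj, Finset.sum_singleton] at h6
      have h7 : ∑ j ∈ d.supportᶜ, d j = 0 := Finset.sum_eq_zero fun j hj => by
        rw [Finset.mem_compl, Finsupp.notMem_support_iff] at hj
        exact hj
      omega
    have he : indF d.support ∈ Gset n c := by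
      simp only [Gset, Set.mem_setOf_eq, indF_support]
      omega
    refine ⟨indF d.support + indF d.support + indF d.support,
      Or.inr ⟨indF d.support + indF d.support,
        ⟨indF d.support, he, indF d.support, he, rfl⟩, indF d.support, he, rfl⟩, ?_⟩
    rw [Finsupp.le_def]
    intro j
    simp only [Finsupp.add_apply, indF_apply]
    by_cases hj : j ∈ d.support
    · have := h3all j hj
      simp only [hj, if_true]
      omega
    · simp only [hj, if_false]
      have := Finsupp.notMem_support_iff.1 hj
      omega
  · -- exactly one entry may equal 1; split off a squarefree part
    have hs3 : 3 ≤ s := by omega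
    have htwo : ∀ i ∈ d.support, ∀ j ∈ d.support, i ≠ j → d i = 1 → 2 ≤ d j := by
      intro i hi j hj hij hdi
      by_contra hcon
      have hdj : d j = 1 := by
        have := Finsupp.mem_support_iff.1 hj
        omega
      have hdisj : Disjoint d.supportᶜ ({i, j} : Finset (Fin (n + 1))) := by
        rw [Finset.disjoint_right]
        intro x hx
        rw [Finset.mem_insert, Finset.mem_singleton] at hx
        rw [Finset.mem_compl, not_not]
        rcases hx with rfl | rfl
        · exact hi
        · exact hj
      have hcard : (d.supportᶜ ∪ {i, j}).card = c := by
        rw [Finset.card_union_of_disjoint hdisj, Finset.card_compl, Fintype.card_fin,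
          Finset.card_pair hij]
        omega
      have h6 := h _ hcard
      rw [Finset.sum_union hdisj, Finset.sum_pair hij] at h6
      have h7 : ∑ j ∈ d.supportᶜ, d j = 0 := Finset.sum_eq_zero fun x hx => by
        rw [Finset.mem_compl, Finsupp.notMem_support_iff] at hx
        exact hx
      omega
    obtain ⟨j, hj, hjbig⟩ : ∃ j ∈ d.support, ∀ i ∈ d.support, i ≠ j → 2 ≤ d i := by
      by_cases hex : ∃ j ∈ d.support, d j = 1
      · obtain ⟨j, hj, hj1⟩ := hex
        exact ⟨j, hj, fun i hi hij => htwo j hj i hi (Ne.symm hij) hj1⟩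
      · push_neg at hex
        obtain ⟨j, hj⟩ := Finset.card_pos.1 (show 0 < d.support.card by omega)
        refine ⟨j, hj, fun i hi _ => ?_⟩
        have h8 := Finsupp.mem_support_iff.1 hi
        have h9 := hex i hi
        omega
    set e : Fin (n + 1) →₀ ℕ := indF (d.support.erase j) with hedef
    set b : Fin (n + 1) →₀ ℕ := d - e with hbdef
    have hecard : e.support.card = s - 1 := by
      rw [hedef, indF_support, Finset.card_erase_of_mem hj]
    have he : e ∈ Gset n c := by
      simp only [Gset, Set.mem_setOf_eq, hecard]
      omega
    have hbd : ∀ i, b i = d i - e i := fun i => by rw [hbdef, Finsupp.tsub_apply]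
    have hbsupp : b.support = d.support := by
      ext i
      by_cases hie : i ∈ d.support.erase j
      · have h2i : 2 ≤ d i := hjbig i (Finset.mem_of_mem_erase hie) (Finset.ne_of_mem_erase hie)
        simp only [Finsupp.mem_support_iff, hbd i, hedef, indF_apply, hie, if_true]
        omega
      · simp only [Finsupp.mem_support_iff, hbd i, hedef, indF_apply, hie, if_false]
        omega
    have hb : b ∈ Gset n (c - 1) := by
      simp only [Gset, Set.mem_setOf_eq, hbsupp]
      omega
    have heq : b + e = d := by
      ext i
      rw [Finsupp.add_apply, hbd i]
      by_cases hie : i ∈ d.support.erase j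
      · have h2i : 2 ≤ d i := hjbig i (Finset.mem_of_mem_erase hie) (Finset.ne_of_mem_erase hie)
        simp only [hedef, indF_apply, hie, if_true]
        omega
      · simp only [hedef, indF_apply, hie, if_false]
        omega
    exact ⟨b + e, Or.inl (Or.inr ⟨b, hb, e, he, rfl⟩), heq ▸ le_refl d⟩
  · -- the support is big; d itself lies in G_{c-2}
    refine ⟨d, Or.inl (Or.inl ?_), le_refl d⟩
    simp only [Gset, Set.mem_setOf_eq]
    omega

end Comb

theorem symbolic_cube_decomposition (k : Type*) [Field k] (n c : ℕ)
    (hn : 1 ≤ n) (hc : 3 ≤ c) (hcn : c ≤ n) :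
    monStarSymb k n c 3 =
      monStar k n (c - 2) + monStar k n (c - 1) * monStar k n c + monStar k n c ^ 3 := by
  rw [monStar_eq k n (show c - 2 ≤ n + 1 by omega), monStar_eq k n (show c - 1 ≤ n + 1 by omega),
    monStar_eq k n (show c ≤ n + 1 by omega), Mspan_mul,
    show (Mspan k n (Gset n c)) ^ 3 =
      Mspan k n (Set.image2 (· + ·) (Set.image2 (· + ·) (Gset n c) (Gset n c)) (Gset n c)) by
        rw [pow_succ, pow_two, Mspan_mul, Mspan_mul],
    Mspan_add, Mspan_add]
  ext p
  rw [mem_Mspan]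
  simp only [monStarSymb, Ideal.mem_iInf, mem_varIdeal_pow_s3]
  constructor
  · intro h d hd
    exact fwd hc hcn fun S hS => h S hS d hd
  · intro h S hS d hd
    obtain ⟨a, haU, had⟩ := h d hd
    exact back hc haU had hS
end

section
/- Let 1 ≤ c ≤ n and m ≥ 1. The following are equivalent: (a) there exists a homogeneous polynomial F ∈ R such that I_c^{(m)} = I_c^m + ⟨F⟩ and I_c^{(m)} ≠ I_c^m (that is, the symbolic defect sdefect(I_c, m) equals 1); (b) c = 2 and m = 2. -/
open MvPolynomial

open Pointwise

namespace StarAux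

variable {k : Type*} [Field k] {n : ℕ}

lemma sum_tsub_single {S : Finset (Fin (n+1))} {a : Fin (n+1) →₀ ℕ} {i : Fin (n+1)}
    (hiS : i ∈ S) (hai : a i ≠ 0) :
    (∑ j ∈ S, ((a - Finsupp.single i 1 : Fin (n+1) →₀ ℕ)) j) + 1 = ∑ j ∈ S, a j := by
  have h1 : ∀ j ∈ S.erase i, ((a - Finsupp.single i 1 : Fin (n+1) →₀ ℕ)) j = a j := by
    intro j hj
    have hji : j ≠ i := Finset.ne_of_mem_erase hj
    simp [Finsupp.tsub_apply, Finsupp.single_apply, hji.symm]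
  have h2 : ((a - Finsupp.single i 1 : Fin (n+1) →₀ ℕ)) i = a i - 1 := by
    simp [Finsupp.tsub_apply]
  have e1 : ∑ j ∈ S, a j = a i + ∑ j ∈ S.erase i, a j :=
    (Finset.add_sum_erase S (fun j => a j) hiS).symm
  have e2 : ∑ j ∈ S, (a - Finsupp.single i 1 : Fin (n+1) →₀ ℕ) j
      = (a i - 1) + ∑ j ∈ S.erase i, a j := by
    rw [← Finset.add_sum_erase S _ hiS, h2, Finset.sum_congr rfl h1]
  omega

lemma monomial_mem_varIdeal_pow {S : Finset (Fin (n+1))} {d : ℕ} {a : Fin (n+1) →₀ ℕ}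
    (h : d ≤ ∑ i ∈ S, a i) (u : k) :
    monomial a u ∈ (varIdeal k n S) ^ d := by
  induction d generalizing a with
  | zero => simp
  | succ d ih =>
    obtain ⟨i, hiS, hai⟩ : ∃ i ∈ S, a i ≠ 0 := by
      by_contra hall
      push_neg at hall
      have : ∑ i ∈ S, a i = 0 := Finset.sum_eq_zero hall
      omega
    have hle : Finsupp.single i 1 ≤ a := by
      rw [Finsupp.single_le_iff]
      omega
    have key : monomial a u
        = monomial (a - Finsupp.single i 1) u * X i := by
      rw [X, monomial_mul, mul_one, tsub_add_cancel_of_le hle]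
    rw [key, pow_succ]
    refine Ideal.mul_mem_mul (ih ?_) ?_
    · have := sum_tsub_single hiS hai
      omega
    · exact Ideal.subset_span ⟨i, hiS, rfl⟩

lemma varIdeal_pow_le_span (S : Finset (Fin (n+1))) (d : ℕ) :
    (varIdeal k n S) ^ d ≤
      Ideal.span ((fun a => monomial a (1:k)) '' {a | d ≤ ∑ i ∈ S, a i}) := by
  induction d with
  | zero =>
    have h1 : (1 : MvPolynomial (Fin (n+1)) k) ∈
        Ideal.span ((fun a => monomial a (1:k)) '' {a | 0 ≤ ∑ i ∈ S, a i}) := by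
      refine Ideal.subset_span ⟨0, by simp, ?_⟩
      simp [monomial_zero']
    rw [pow_zero, Ideal.one_eq_top, (Ideal.eq_top_iff_one _).mpr h1]
  | succ d ih =>
    rw [pow_succ]
    calc (varIdeal k n S) ^ d * varIdeal k n S
        ≤ Ideal.span ((fun a => monomial a (1:k)) '' {a | d ≤ ∑ i ∈ S, a i}) *
          Ideal.span ((fun i => (X i : MvPolynomial (Fin (n + 1)) k)) '' ↑S) :=
          Ideal.mul_mono ih le_rfl
      _ = Ideal.span (((fun a => monomial a (1:k)) '' {a | d ≤ ∑ i ∈ S, a i}) *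
          ((fun i => (X i : MvPolynomial (Fin (n + 1)) k)) '' ↑S)) :=
          Ideal.span_mul_span' _ _
      _ ≤ Ideal.span ((fun a => monomial a (1:k)) '' {a | d + 1 ≤ ∑ i ∈ S, a i}) := by
          rw [Ideal.span_le]
          rintro x ⟨y, ⟨a, ha, rfl⟩, z, ⟨i, hiS, rfl⟩, rfl⟩
          refine Ideal.subset_span ⟨a + Finsupp.single i 1, ?_, ?_⟩
          · have hsum : ∑ j ∈ S, ((a + Finsupp.single i 1 : Fin (n+1) →₀ ℕ)) j
                = (∑ j ∈ S, a j) + ∑ j ∈ S, Finsupp.single i (1:ℕ) j := by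
              rw [← Finset.sum_add_distrib]
              exact Finset.sum_congr rfl fun j _ => Finsupp.add_apply a (Finsupp.single i 1) j
            have hsingle : ∑ j ∈ S, Finsupp.single i (1:ℕ) j = 1 := by
              have h3 : ∀ j ∈ S, Finsupp.single i (1:ℕ) j = if i = j then 1 else 0 := by
                intro j _; rw [Finsupp.single_apply]
              rw [Finset.sum_congr rfl h3, Finset.sum_ite_eq, if_pos (Finset.mem_coe.mp hiS)]
            have : d ≤ ∑ j ∈ S, a j := ha
            simp only [Set.mem_setOf_eq, hsum, hsingle]
            omega
          · simp only
            rw [X, monomial_mul, mul_one]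

lemma mem_varIdeal_pow_iff {S : Finset (Fin (n+1))} {d : ℕ} {f : MvPolynomial (Fin (n+1)) k} :
    f ∈ (varIdeal k n S) ^ d ↔ ∀ b ∈ f.support, d ≤ ∑ i ∈ S, b i := by
  constructor
  · intro hf b hb
    have h := varIdeal_pow_le_span S d hf
    rw [mem_ideal_span_monomial_image] at h
    obtain ⟨a, ha, hab⟩ := h b hb
    exact le_trans ha (Finset.sum_le_sum fun i _ => hab i)
  · intro h
    rw [f.as_sum]
    exact Ideal.sum_mem _ fun b hb => monomial_mem_varIdeal_pow (h b hb) _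

lemma mem_monStarSymb_iff {c m : ℕ} {f : MvPolynomial (Fin (n+1)) k} :
    f ∈ monStarSymb k n c m ↔
      ∀ S : Finset (Fin (n+1)), S.card = c → ∀ b ∈ f.support, m ≤ ∑ i ∈ S, b i := by
  unfold monStarSymb
  simp only [Submodule.mem_iInf]
  exact forall_congr' fun S => forall_congr' fun _ => mem_varIdeal_pow_iff

lemma monStar_eq_symb_one (c : ℕ) : monStar k n c = monStarSymb k n c 1 := by
  unfold monStar monStarSymb
  simp [pow_one]

lemma mem_monStar_iff {c : ℕ} {f : MvPolynomial (Fin (n+1)) k} :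
    f ∈ monStar k n c ↔
      ∀ S : Finset (Fin (n+1)), S.card = c → ∀ b ∈ f.support, 1 ≤ ∑ i ∈ S, b i := by
  rw [monStar_eq_symb_one, mem_monStarSymb_iff]


lemma ideal_pow_mono {R : Type*} [CommSemiring R] {I J : Ideal R} (h : I ≤ J) (m : ℕ) :
    I ^ m ≤ J ^ m := by
  induction m with
  | zero => simp
  | succ m ih => rw [pow_succ, pow_succ]; exact Ideal.mul_mono ih h

lemma monStar_pow_le_symb (c m : ℕ) : (monStar k n c) ^ m ≤ monStarSymb k n c m := by
  unfold monStarSymb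
  refine le_iInf fun S => le_iInf fun hS => ?_
  refine ideal_pow_mono ?_ m
  unfold monStar
  exact iInf_le_of_le S (iInf_le _ hS)

lemma monStar_le_univ_pow {c : ℕ} (hc : 1 ≤ c) (hcn : c ≤ n) :
    monStar k n c ≤ (varIdeal k n Finset.univ) ^ (n + 2 - c) := by
  intro f hf
  rw [mem_varIdeal_pow_iff]
  intro b hb
  rw [mem_monStar_iff] at hf
  classical
  set Z := Finset.univ.filter (fun i : Fin (n+1) => b i = 0) with hZ
  have hZc : Z.card < c := by
    by_contra hle
    push_neg at hle
    obtain ⟨T, hTZ, hTc⟩ := Finset.exists_subset_card_eq hle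
    have h1 := hf T hTc b hb
    have h2 : ∑ i ∈ T, b i = 0 := Finset.sum_eq_zero (fun i hi => by
      have := hTZ hi
      rw [hZ, Finset.mem_filter] at this
      exact this.2)
    omega
  have hcard : (Finset.univ \ Z).card = (n+1) - Z.card := by
    rw [Finset.card_sdiff_of_subset (Finset.subset_univ Z), Finset.card_univ, Fintype.card_fin]
  have hsum : (Finset.univ \ Z).card ≤ ∑ i ∈ Finset.univ \ Z, b i := by
    have := Finset.card_nsmul_le_sum (Finset.univ \ Z) (fun i => b i) 1 (fun i hi => by
      rw [Finset.mem_sdiff, hZ, Finset.mem_filter] at hi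
      have hbi : ¬ b i = 0 := fun h0 => hi.2 ⟨Finset.mem_univ i, h0⟩
      show 1 ≤ b i
      omega)
    simpa using this
  have hle2 : ∑ i ∈ Finset.univ \ Z, b i ≤ ∑ i ∈ Finset.univ, b i :=
    Finset.sum_le_sum_of_subset (Finset.sdiff_subset)
  have hZn : Z.card ≤ n + 1 := le_trans (Finset.card_le_univ Z) (by simp)
  calc n + 2 - c ≤ (n+1) - Z.card := by omega
    _ = (Finset.univ \ Z).card := hcard.symm
    _ ≤ ∑ i ∈ Finset.univ \ Z, b i := hsum
    _ ≤ ∑ i ∈ Finset.univ, b i := hle2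

lemma monStar_pow_le_univ_pow {c : ℕ} (m : ℕ) (hc : 1 ≤ c) (hcn : c ≤ n) :
    (monStar k n c) ^ m ≤ (varIdeal k n Finset.univ) ^ (m * (n + 2 - c)) := by
  calc (monStar k n c) ^ m ≤ ((varIdeal k n Finset.univ) ^ (n + 2 - c)) ^ m :=
        ideal_pow_mono (monStar_le_univ_pow hc hcn) m
    _ = (varIdeal k n Finset.univ) ^ (m * (n + 2 - c)) := by rw [← pow_mul, mul_comm]

lemma isUnit_eq_C {N : ℕ} {F : MvPolynomial (Fin N) k} (h : IsUnit F) :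
    ∃ u : k, u ≠ 0 ∧ F = C u := by
  induction N with
  | zero =>
    have hF : F = C (constantCoeff F) := eq_C_of_isEmpty F
    refine ⟨constantCoeff F, ?_, hF⟩
    intro h0
    rw [h0, map_zero] at hF
    rw [hF] at h
    exact h.ne_zero rfl
  | succ N ih =>
    have h2 : IsUnit (finSuccEquiv k N F) := h.map _
    rw [Polynomial.isUnit_iff] at h2
    obtain ⟨q, hq, hqF⟩ := h2
    obtain ⟨u, hu, rfl⟩ := ih hq
    refine ⟨u, hu, ?_⟩
    apply (finSuccEquiv k N).injective
    rw [← hqF]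
    simp [finSuccEquiv_apply]

lemma prime_X_fin {N : ℕ} (i : Fin (N+1)) : Prime (X i : MvPolynomial (Fin (N+1)) k) := by
  have h0 : Prime (X 0 : MvPolynomial (Fin (N+1)) k) := by
    rw [← MulEquiv.prime_iff (finSuccEquiv k N).toMulEquiv]
    have : (finSuccEquiv k N).toMulEquiv (X 0) = Polynomial.X := by
      simpa using finSuccEquiv_X_zero (R := k) (n := N)
    rw [this]
    exact Polynomial.prime_X
  have h1 := (MulEquiv.prime_iff (renameEquiv k (Equiv.swap (0 : Fin (N+1)) i)).toMulEquiv).mpr h0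
  have h2 : (renameEquiv k (Equiv.swap (0 : Fin (N+1)) i)).toMulEquiv (X 0)
      = (X i : MvPolynomial (Fin (N+1)) k) := by
    show rename (Equiv.swap (0 : Fin (N+1)) i) (X 0) = X i
    rw [rename_X, Equiv.swap_apply_left]
  rwa [h2] at h1

lemma dvd_monomial_struct {N : ℕ} (D : ℕ) (μ : Fin (N+1) →₀ ℕ) (hD : (∑ i, μ i) ≤ D)
    (F : MvPolynomial (Fin (N+1)) k) (hF : F ∣ monomial μ 1) :
    ∃ (ν : Fin (N+1) →₀ ℕ) (u : k), ν ≤ μ ∧ u ≠ 0 ∧ F = monomial ν u := by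
  induction D generalizing μ F with
  | zero =>
    have hμ : μ = 0 := by
      have h0 : ∑ i, μ i = 0 := Nat.le_zero.mp hD
      ext i
      have := (Finset.sum_eq_zero_iff).mp h0 i (Finset.mem_univ i)
      simpa using this
    rw [hμ] at hF ⊢
    have hunit : IsUnit F := isUnit_of_dvd_one (by rwa [monomial_zero', C_1] at hF)
    obtain ⟨u, hu, rfl⟩ := isUnit_eq_C hunit
    exact ⟨0, u, le_rfl, hu, by rw [monomial_zero']⟩
  | succ D ih =>
    rcases Nat.lt_or_ge (∑ i, μ i) (D+1) with hlt | hge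
    · exact ih μ (Nat.lt_succ_iff.mp hlt) F hF
    · obtain ⟨i, hi⟩ : ∃ i, μ i ≠ 0 := by
        by_contra hall
        push_neg at hall
        have : ∑ i, μ i = 0 := Finset.sum_eq_zero (fun i _ => hall i)
        omega
      have hle : Finsupp.single i 1 ≤ μ := Finsupp.single_le_iff.mpr (by omega)
      have hmono : monomial μ (1:k) = X i * monomial (μ - Finsupp.single i 1) 1 := by
        rw [X, monomial_mul, one_mul, add_tsub_cancel_of_le hle]
      obtain ⟨g, hg⟩ := hF
      have hsum' : (∑ j, (μ - Finsupp.single i 1 : Fin (N+1) →₀ ℕ) j) ≤ D := by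
        have := sum_tsub_single (S := Finset.univ) (Finset.mem_univ i) hi
        omega
      have hXdvd : (X i : MvPolynomial (Fin (N+1)) k) ∣ F * g := by
        rw [← hg, hmono]
        exact Dvd.intro _ rfl
      have hXne : (X i : MvPolynomial (Fin (N+1)) k) ≠ 0 := X_ne_zero i
      rcases (prime_X_fin i).2.2 F g hXdvd with hXF | hXg
      · obtain ⟨F', rfl⟩ := hXF
        have hcancel : F' * g = monomial (μ - Finsupp.single i 1) 1 := by
          apply mul_left_cancel₀ hXne
          rw [← mul_assoc, ← hg, hmono]
        obtain ⟨ν', u, hν', hu, rfl⟩ := ih _ hsum' F' ⟨g, hcancel.symm⟩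
        refine ⟨Finsupp.single i 1 + ν', u, ?_, hu, ?_⟩
        · calc Finsupp.single i 1 + ν'
              ≤ Finsupp.single i 1 + (μ - Finsupp.single i 1) := add_le_add_right hν' _
            _ = μ := add_tsub_cancel_of_le hle
        · rw [X, monomial_mul, one_mul]
      · obtain ⟨g', rfl⟩ := hXg
        have hcancel : F * g' = monomial (μ - Finsupp.single i 1) 1 := by
          apply mul_left_cancel₀ hXne
          rw [show X i * (F * g') = F * (X i * g') by ring, ← hg, hmono]
        obtain ⟨ν, u, hν, hu, hFu⟩ := ih _ hsum' F ⟨g', hcancel.symm⟩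
        exact ⟨ν, u, le_trans hν tsub_le_self, hu, hFu⟩


lemma sum_univ_eq_degree (b : Fin (n+1) →₀ ℕ) : (∑ i, b i) = Finsupp.degree b := by
  rw [Finsupp.degree]
  exact (Finset.sum_subset (Finset.subset_univ _)
    (fun i _ hnot => Finsupp.notMem_support_iff.mp hnot)).symm

lemma isHomog_support_sum {F : MvPolynomial (Fin (n+1)) k} {d : ℕ} (hF : F.IsHomogeneous d) :
    ∀ b ∈ F.support, (∑ i, b i) = d := by
  intro b hb
  have h1 := hF (mem_support_iff.mp hb)
  replace h1 : Finsupp.degree b = d := by rw [Finsupp.degree_eq_weight_one]; exact h1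
  rw [sum_univ_eq_degree]
  exact h1

lemma dvd_of_mem_sup {J : Ideal (MvPolynomial (Fin (n+1)) k)} {E : ℕ}
    (hJ : J ≤ (varIdeal k n Finset.univ) ^ E)
    {F : MvPolynomial (Fin (n+1)) k} {d : ℕ} (hF : F.IsHomogeneous d)
    {μ : Fin (n+1) →₀ ℕ} (hμ : (∑ i, μ i) < E)
    (h : monomial μ (1:k) ∈ J ⊔ Ideal.span {F}) :
    F ∣ monomial μ 1 := by
  classical
  have hFdeg := isHomog_support_sum hF
  obtain ⟨p, hp, q, hq, hpq⟩ := Submodule.mem_sup.mp h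
  obtain ⟨g, rfl⟩ := Ideal.mem_span_singleton'.mp hq
  set s : Finset (Fin (n+1) →₀ ℕ) :=
    g.support.filter (fun b => (∑ i, b i) + d < E) with hs
  set gl : MvPolynomial (Fin (n+1)) k := ∑ b ∈ s, monomial b (coeff b g) with hgl
  have hglcoeff : ∀ c, coeff c gl = if c ∈ s then coeff c g else 0 := by
    intro c
    rw [hgl, coeff_sum, Finset.sum_congr rfl (fun b _ => coeff_monomial c b (coeff b g))]
    exact Finset.sum_ite_eq' s c (fun b => coeff b g)
  have hglsupp : gl.support ⊆ s := by
    intro b hb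
    rw [mem_support_iff, hglcoeff] at hb
    by_contra hbs
    rw [if_neg hbs] at hb
    exact hb rfl
  have hgh : g - gl ∈ (varIdeal k n Finset.univ) ^ (E - d) := by
    rw [mem_varIdeal_pow_iff]
    intro b hb
    rw [mem_support_iff, coeff_sub, hglcoeff] at hb
    by_cases hbs : b ∈ s
    · rw [if_pos hbs, sub_self] at hb
      exact absurd rfl hb
    · have hbg : b ∈ g.support := by
        rw [mem_support_iff]
        intro h0
        rw [if_neg hbs, h0, sub_zero] at hb
        exact hb rfl
      have : ¬ ((∑ i, b i) + d < E) := by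
        intro hcond
        exact hbs (Finset.mem_filter.mpr ⟨hbg, hcond⟩)
      omega
  have hFmem : F ∈ (varIdeal k n Finset.univ) ^ d := by
    rw [mem_varIdeal_pow_iff]
    intro b hb
    exact (hFdeg b hb).ge
  have hghF : (g - gl) * F ∈ (varIdeal k n Finset.univ) ^ E := by
    have h1 := Ideal.mul_mem_mul hgh hFmem
    rw [← pow_add] at h1
    exact Ideal.pow_le_pow_right (by omega) h1
  have hq2 : monomial μ (1:k) - gl * F ∈ (varIdeal k n Finset.univ) ^ E := by
    have h2 : monomial μ (1:k) - gl * F = p + (g - gl) * F := by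
      rw [← hpq]; ring
    rw [h2]
    exact Ideal.add_mem _ (hJ hp) hghF
  have hsupp : ∀ b ∈ (monomial μ (1:k) - gl * F).support, (∑ i, b i) < E := by
    intro b hb
    have hb2 := support_sub _ (monomial μ (1:k)) (gl * F) hb
    rw [Finset.mem_union] at hb2
    rcases hb2 with hb2 | hb2
    · have hbμ : b = μ := by
        rw [support_monomial, if_neg (one_ne_zero (α := k))] at hb2
        exact Finset.mem_singleton.mp hb2
      rw [hbμ]; exact hμ
    · have hb3 := support_mul gl F hb2
      rw [Finset.mem_add] at hb3
      obtain ⟨b1, hb1, b2, hb2', rfl⟩ := hb3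
      have h1 : (∑ i, b1 i) + d < E := (Finset.mem_filter.mp (hglsupp hb1)).2
      have h2 : (∑ i, b2 i) = d := hFdeg b2 hb2'
      have h3 : (∑ i, ((b1 + b2 : Fin (n+1) →₀ ℕ)) i) = (∑ i, b1 i) + (∑ i, b2 i) := by
        rw [← Finset.sum_add_distrib]
        exact Finset.sum_congr rfl fun j _ => Finsupp.add_apply b1 b2 j
      omega
  have hzero : monomial μ (1:k) - gl * F = 0 := by
    by_contra hne
    obtain ⟨b, hb⟩ := Finset.nonempty_iff_ne_empty.mpr (mt support_eq_empty.mp hne)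
    have h1 := hsupp b hb
    have h2 := (mem_varIdeal_pow_iff.mp hq2) b hb
    omega
  exact ⟨gl, by rw [sub_eq_zero.mp hzero]; ring⟩


lemma monomial_mem_symb_iff {c m : ℕ} {a : Fin (n+1) →₀ ℕ} {u : k} (hu : u ≠ 0) :
    monomial a u ∈ monStarSymb k n c m ↔
      ∀ S : Finset (Fin (n+1)), S.card = c → m ≤ ∑ i ∈ S, a i := by
  classical
  rw [mem_monStarSymb_iff]
  constructor
  · intro h S hS
    exact h S hS a (by rw [support_monomial, if_neg hu]; exact Finset.mem_singleton_self a)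
  · intro h S hS b hb
    rw [support_monomial, if_neg hu] at hb
    rw [Finset.mem_singleton.mp hb]
    exact h S hS

lemma symb_one_eq_pow (m : ℕ) : monStarSymb k n 1 m = (monStar k n 1) ^ m := by
  classical
  apply le_antisymm
  · intro f hf
    rw [mem_monStarSymb_iff] at hf
    have hall : ∀ b ∈ f.support, ∀ i, m ≤ b i := by
      intro b hb i
      have := hf {i} (Finset.card_singleton i) b hb
      simpa using this
    rw [f.as_sum]
    refine Ideal.sum_mem _ fun b hb => ?_
    set onev : Fin (n+1) →₀ ℕ := Finsupp.equivFunOnFinite.symm (fun _ => 1) with honev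
    have honei : ∀ i, onev i = 1 := fun i => rfl
    have hmem1 : monomial onev (1:k) ∈ monStar k n 1 := by
      rw [mem_monStar_iff]
      intro S hS b' hb'
      have hb'' : b' = onev := by
        rw [support_monomial, if_neg (one_ne_zero (α := k))] at hb'
        exact Finset.mem_singleton.mp hb'
      obtain ⟨i, rfl⟩ := Finset.card_eq_one.mp hS
      rw [hb'']
      simp [honei]
    have hle : m • onev ≤ b := by
      intro i
      have h1 := hall b hb i
      have h2 : (m • onev : Fin (n+1) →₀ ℕ) i = m := by
        rw [Finsupp.smul_apply, honei, smul_eq_mul, mul_one]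
      omega
    have key : monomial b (coeff b f)
        = (monomial onev (1:k)) ^ m * monomial (b - m • onev) (coeff b f) := by
      rw [monomial_pow, monomial_mul, one_pow, one_mul, add_tsub_cancel_of_le hle]
    rw [key]
    exact Ideal.mul_mem_right _ _ (Ideal.pow_mem_pow hmem1 m)
  · exact monStar_pow_le_symb 1 m

lemma card_filter_val_lt (t : ℕ) (ht : t ≤ n+1) :
    ((Finset.univ : Finset (Fin (n+1))).filter (fun i => i.val < t)).card = t := by
  classical
  have himg : ((Finset.univ : Finset (Fin (n+1))).filter (fun i => i.val < t))
      = (Finset.univ : Finset (Fin t)).image (Fin.castLE ht) := by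
    ext i
    simp only [Finset.mem_filter, Finset.mem_image, Finset.mem_univ, true_and]
    constructor
    · intro hi
      exact ⟨⟨i.val, hi⟩, rfl⟩
    · rintro ⟨j, rfl⟩
      exact j.isLt
  rw [himg, Finset.card_image_of_injective _ (Fin.castLE_injective ht), Finset.card_univ,
    Fintype.card_fin]


def fA (m : ℕ) (s : Fin (n+1)) : Fin (n+1) → ℕ := fun i => if i = s then 1 else m - 1

def fB (c m : ℕ) (s : Fin (n+1)) : Fin (n+1) → ℕ :=
  fun i => if i = s then 1 else if i.val < c - 1 then 0 else m - 1

-- Case A : c = 2, m ≥ 3. μ = (1 at s, m-1 elsewhere)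
lemma starA {m : ℕ} (hm : 2 ≤ m) (s : Fin (n+1)) {S : Finset (Fin (n+1))} (hS : S.card = 2) :
    m ≤ ∑ i ∈ S, fA m s i := by
  classical
  obtain ⟨a, b, hab, rfl⟩ := Finset.card_eq_two.mp hS
  rw [Finset.sum_pair hab]
  unfold fA
  by_cases ha : a = s
  · have hb : b ≠ s := fun hb => hab (hb ▸ ha)
    rw [if_pos ha, if_neg hb]
    omega
  · rw [if_neg ha]
    by_cases hb : b = s
    · rw [if_pos hb]; omega
    · rw [if_neg hb]; omega

lemma degA {m : ℕ} (hm : 2 ≤ m) (hn2 : 2 ≤ n) (s : Fin (n+1)) :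
    (∑ i, fA m s i) < m * n := by
  classical
  have hsplit : ∑ i, fA m s i
      = fA m s s + ∑ i ∈ Finset.univ.erase s, fA m s i :=
    (Finset.add_sum_erase _ _ (Finset.mem_univ s)).symm
  have herase : ∑ i ∈ Finset.univ.erase s, fA m s i = n * (m - 1) := by
    have hval : ∀ i ∈ Finset.univ.erase s, fA m s i = m - 1 := by
      intro i hi
      unfold fA
      rw [if_neg (Finset.ne_of_mem_erase hi)]
    rw [Finset.sum_congr rfl hval, Finset.sum_const, smul_eq_mul,
      Finset.card_erase_of_mem (Finset.mem_univ s), Finset.card_univ, Fintype.card_fin]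
    simp
  have hss : fA m s s = 1 := by unfold fA; simp
  rw [hsplit, hss, herase]
  have hq : m * n = n * (m - 1) + n := by
    obtain ⟨q, rfl⟩ : ∃ q, m = q + 1 := ⟨m - 1, by omega⟩
    rw [Nat.add_sub_cancel, Nat.add_mul, one_mul, Nat.mul_comm]
  rw [hq]
  omega

-- Case B : 3 ≤ c ≤ n, m ≥ 2.
lemma starB {c m : ℕ} (hm : 2 ≤ m) (hc : 3 ≤ c) {s : Fin (n+1)} (hs : s.val < c - 1)
    {S : Finset (Fin (n+1))} (hS : S.card = c) :
    m ≤ ∑ i ∈ S, fB c m s i := by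
  classical
  set L := S.filter (fun i => i.val < c - 1) with hL
  set H := S.filter (fun i => ¬ i.val < c - 1) with hH
  have hsplit : (∑ i ∈ L, fB c m s i) + ∑ i ∈ H, fB c m s i = ∑ i ∈ S, fB c m s i :=
    Finset.sum_filter_add_sum_filter_not S _ _
  have hHval : ∀ i ∈ H, fB c m s i = m - 1 := by
    intro i hi
    rw [hH, Finset.mem_filter] at hi
    have his : i ≠ s := fun he => hi.2 (he ▸ hs)
    unfold fB
    rw [if_neg his, if_neg hi.2]
  have hLsub : L ⊆ Finset.univ.filter (fun i => i.val < c - 1) := by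
    rw [hL]
    exact Finset.filter_subset_filter _ (Finset.subset_univ S)
  have hc1n : c - 1 ≤ n + 1 := by
    have := hS ▸ Finset.card_le_univ S
    simp only [Finset.card_univ, Fintype.card_fin] at this
    omega
  have hLcard : L.card ≤ c - 1 := by
    have := Finset.card_le_card hLsub
    rwa [card_filter_val_lt (c-1) hc1n] at this
  have hcards : L.card + H.card = c := by
    rw [hL, hH, Finset.card_filter_add_card_filter_not, hS]
  have hHsum : ∑ i ∈ H, fB c m s i = H.card * (m - 1) := by
    rw [Finset.sum_congr rfl hHval, Finset.sum_const, smul_eq_mul]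
  rcases Nat.lt_or_ge H.card 2 with h2 | h2
  · have hH1 : H.card = 1 := by omega
    have hLfull : L = Finset.univ.filter (fun i => i.val < c - 1) :=
      Finset.eq_of_subset_of_card_le hLsub (by rw [card_filter_val_lt (c-1) hc1n]; omega)
    have hsL : s ∈ L := by
      rw [hLfull]
      exact Finset.mem_filter.mpr ⟨Finset.mem_univ s, hs⟩
    have h4 : fB c m s s = 1 := by unfold fB; simp
    have hLsum : 1 ≤ ∑ i ∈ L, fB c m s i := by
      calc (1:ℕ) = fB c m s s := h4.symm
        _ ≤ ∑ i ∈ L, fB c m s i := Finset.single_le_sum (fun i _ => Nat.zero_le _) hsL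
    have hHsum1 : ∑ i ∈ H, fB c m s i = m - 1 := by rw [hHsum, hH1, one_mul]
    rw [← hsplit, hHsum1]
    omega
  · have h3 : 2 * (m - 1) ≤ H.card * (m - 1) := Nat.mul_le_mul_right _ h2
    calc m ≤ 2 * (m - 1) := by omega
      _ ≤ H.card * (m - 1) := h3
      _ = ∑ i ∈ H, fB c m s i := hHsum.symm
      _ ≤ ∑ i ∈ S, fB c m s i := by rw [← hsplit]; omega

lemma degB {c m : ℕ} (hm : 2 ≤ m) (hc : 3 ≤ c) (hcn : c ≤ n) {s : Fin (n+1)}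
    (hs : s.val < c - 1) :
    (∑ i, fB c m s i) < m * (n + 2 - c) := by
  classical
  have hbound : ∀ i : Fin (n+1), fB c m s i
      ≤ (if i = s then 1 else 0) + (if i.val < c - 1 then 0 else m - 1) := by
    intro i
    unfold fB
    by_cases hi : i = s
    · subst hi
      rw [if_pos rfl, if_pos rfl, if_pos hs]
    · rw [if_neg hi, if_neg hi]
      omega
  have h1 : ∑ i, fB c m s i
      ≤ (∑ i : Fin (n+1), (if i = s then (1:ℕ) else 0)) + ∑ i : Fin (n+1), (if i.val < c - 1 then 0 else m - 1) := by
    rw [← Finset.sum_add_distrib]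
    exact Finset.sum_le_sum (fun i _ => hbound i)
  have h2 : ∑ i : Fin (n+1), (if i = s then (1:ℕ) else 0) = 1 := by
    rw [Finset.sum_ite_eq' Finset.univ s (fun _ => (1:ℕ)), if_pos (Finset.mem_univ s)]
  have h3 : ∑ i : Fin (n+1), (if i.val < c - 1 then 0 else m - 1)
      = ((Finset.univ : Finset (Fin (n+1))).filter (fun i => ¬ i.val < c - 1)).card * (m - 1) := by
    rw [Finset.sum_ite, Finset.sum_const, Finset.sum_const, smul_eq_mul, smul_eq_mul]
    omega
  have h4 : ((Finset.univ : Finset (Fin (n+1))).filter (fun i => ¬ i.val < c - 1)).card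
      = n + 2 - c := by
    have h5 := Finset.card_filter_add_card_filter_not
      (s := (Finset.univ : Finset (Fin (n+1)))) (p := fun i => i.val < c - 1)
    rw [card_filter_val_lt (c-1) (by omega), Finset.card_univ, Fintype.card_fin] at h5
    omega
  have hq : m * (n + 2 - c) = (n + 2 - c) * (m - 1) + (n + 2 - c) := by
    obtain ⟨q, rfl⟩ : ∃ q, m = q + 1 := ⟨m - 1, by omega⟩
    rw [Nat.add_sub_cancel, Nat.add_mul, one_mul, Nat.mul_comm]
  have hK : 2 ≤ n + 2 - c := by omega
  rw [h2, h3, h4] at h1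
  rw [hq]
  omega


lemma no_single_gen {c m : ℕ} (hc : 1 ≤ c) (hcn : c ≤ n)
    {F : MvPolynomial (Fin (n+1)) k} {d : ℕ} (hF : F.IsHomogeneous d)
    (Heq : monStarSymb k n c m = monStar k n c ^ m + Ideal.span {F})
    (μ1 μ2 : Fin (n+1) →₀ ℕ)
    (hstar1 : ∀ S : Finset (Fin (n+1)), S.card = c → m ≤ ∑ i ∈ S, μ1 i)
    (hstar2 : ∀ S : Finset (Fin (n+1)), S.card = c → m ≤ ∑ i ∈ S, μ2 i)
    (hdeg1 : (∑ i, μ1 i) < m * (n+2-c)) (hdeg2 : (∑ i, μ2 i) < m * (n+2-c))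
    (S₀ : Finset (Fin (n+1))) (hS₀ : S₀.card = c)
    (hbad : ∀ ν : Fin (n+1) →₀ ℕ, ν ≤ μ1 → ν ≤ μ2 → (∑ i ∈ S₀, ν i) < m) :
    False := by
  have hJ := monStar_pow_le_univ_pow (k := k) (c := c) m hc hcn
  have hmem1 : monomial μ1 (1:k) ∈ monStarSymb k n c m :=
    (monomial_mem_symb_iff one_ne_zero).mpr hstar1
  have hmem2 : monomial μ2 (1:k) ∈ monStarSymb k n c m :=
    (monomial_mem_symb_iff one_ne_zero).mpr hstar2
  rw [Heq, Ideal.add_eq_sup] at hmem1 hmem2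
  have hdvd1 := dvd_of_mem_sup hJ hF hdeg1 hmem1
  have hdvd2 := dvd_of_mem_sup hJ hF hdeg2 hmem2
  obtain ⟨ν, u, hν1, hu, hFeq⟩ := dvd_monomial_struct (∑ i, μ1 i) μ1 le_rfl F hdvd1
  obtain ⟨ν2, u2, hν2, hu2, hFeq2⟩ := dvd_monomial_struct (∑ i, μ2 i) μ2 le_rfl F hdvd2
  have hνeq : ν2 = ν := by
    have h1 : coeff ν F = u := by rw [hFeq, coeff_monomial, if_pos rfl]
    have h2 : coeff ν F = if ν2 = ν then u2 else 0 := by rw [hFeq2, coeff_monomial]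
    by_contra hne
    rw [if_neg hne] at h2
    exact hu (h1.symm.trans h2)
  subst hνeq
  have hFsymb : F ∈ monStarSymb k n c m := by
    rw [Heq, Ideal.add_eq_sup]
    exact Submodule.mem_sup_right (Ideal.mem_span_singleton_self F)
  rw [hFeq] at hFsymb
  have hstarν := (monomial_mem_symb_iff hu).mp hFsymb S₀ hS₀
  have hbadν := hbad ν2 hν1 hν2
  omega

lemma backward (hn2 : 2 ≤ n) :
    ∃ F : MvPolynomial (Fin (n+1)) k, (∃ d, F.IsHomogeneous d) ∧
      monStarSymb k n 2 2 = monStar k n 2 ^ 2 + Ideal.span {F} ∧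
      monStarSymb k n 2 2 ≠ monStar k n 2 ^ 2 := by
  classical
  set onev : Fin (n+1) →₀ ℕ := Finsupp.equivFunOnFinite.symm (fun _ => 1) with honev
  have honei : ∀ i, onev i = 1 := fun i => rfl
  have hFsymb : monomial onev (1:k) ∈ monStarSymb k n 2 2 := by
    rw [monomial_mem_symb_iff (one_ne_zero (α := k))]
    intro S hS
    have h1 : ∑ i ∈ S, onev i = 2 := by
      rw [Finset.sum_congr rfl (fun i _ => honei i), Finset.sum_const, smul_eq_mul, mul_one, hS]
    omega
  refine ⟨monomial onev 1, ⟨Finsupp.degree onev, isHomogeneous_monomial _ rfl⟩, ?_, ?_⟩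
  · apply le_antisymm
    · intro f hf
      rw [mem_monStarSymb_iff] at hf
      rw [f.as_sum]
      refine Ideal.sum_mem _ fun b hb => ?_
      have hpair : ∀ i j : Fin (n+1), i ≠ j → 2 ≤ b i + b j := by
        intro i j hij
        have h1 := hf {i, j}
          (by rw [Finset.card_insert_of_notMem (by simpa using hij), Finset.card_singleton]) b hb
        rwa [Finset.sum_pair hij] at h1
      rw [Ideal.add_eq_sup]
      by_cases hz : ∃ i, b i = 0
      · obtain ⟨i, hi⟩ := hz
        refine Submodule.mem_sup_left ?_
        set gv : Fin (n+1) →₀ ℕ := Finsupp.equivFunOnFinite.symm (fun j => if j = i then 0 else 1)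
          with hgv
        have hgvi : ∀ j, gv j = if j = i then 0 else 1 := fun j => rfl
        have hmem : monomial gv (1:k) ∈ monStar k n 2 := by
          rw [mem_monStar_iff]
          intro S hS b' hb'
          rw [support_monomial, if_neg (one_ne_zero (α := k))] at hb'
          rw [Finset.mem_singleton.mp hb']
          obtain ⟨p, q, hpq, rfl⟩ := Finset.card_eq_two.mp hS
          rw [Finset.sum_pair hpq, hgvi, hgvi]
          by_cases hp : p = i
          · have hq : ¬ q = i := fun hq => hpq (hq ▸ hp ▸ rfl)
            rw [if_pos hp, if_neg hq]
          · rw [if_neg hp]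
            omega
        have hle : (2:ℕ) • gv ≤ b := by
          intro j
          rw [Finsupp.smul_apply, hgvi, smul_eq_mul]
          by_cases hj : j = i
          · rw [if_pos hj]
            omega
          · rw [if_neg hj]
            have := hpair i j (fun he => hj he.symm)
            omega
        have key : monomial b (coeff b f)
            = (monomial gv (1:k)) ^ 2 * monomial (b - 2 • gv) (coeff b f) := by
          rw [monomial_pow, monomial_mul, one_pow, one_mul, add_tsub_cancel_of_le hle]
        rw [key]
        exact Ideal.mul_mem_right _ _ (Ideal.pow_mem_pow hmem 2)
      · push_neg at hz
        refine Submodule.mem_sup_right ?_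
        rw [Ideal.mem_span_singleton]
        have hle : onev ≤ b := by
          intro j
          rw [honei]
          exact Nat.one_le_iff_ne_zero.mpr (hz j)
        exact ⟨monomial (b - onev) (coeff b f),
          by rw [monomial_mul, one_mul, add_tsub_cancel_of_le hle]⟩
    · rw [Ideal.add_eq_sup]
      apply sup_le
      · exact monStar_pow_le_symb 2 2
      · rw [Ideal.span_le, Set.singleton_subset_iff]
        exact hFsymb
  · intro hcontra
    have hFin := hFsymb
    rw [hcontra] at hFin
    have h0 := monStar_pow_le_univ_pow (k := k) (c := 2) 2 (by omega) (by omega) hFin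
    rw [mem_varIdeal_pow_iff] at h0
    have h1 := h0 onev
      (by rw [support_monomial, if_neg (one_ne_zero (α := k))]; exact Finset.mem_singleton_self _)
    have h2 : ∑ i ∈ Finset.univ, onev i = n + 1 := by
      rw [Finset.sum_congr rfl (fun i _ => honei i), Finset.sum_const, smul_eq_mul, mul_one,
        Finset.card_univ, Fintype.card_fin]
    have h3 : n + 2 - 2 = n := by omega
    rw [h3, h2] at h1
    omega

end StarAux

theorem symbolic_defect_one_iff (k : Type*) [Field k] (n c m : ℕ)
    (hn : 1 ≤ n) (hc : 1 ≤ c) (hcn : c ≤ n) (hm : 1 ≤ m) :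
    ((∃ F : MvPolynomial (Fin (n + 1)) k, (∃ d, F.IsHomogeneous d) ∧
        monStarSymb k n c m = monStar k n c ^ m + Ideal.span {F} ∧
        monStarSymb k n c m ≠ monStar k n c ^ m) ↔ (c = 2 ∧ m = 2)) := by
  constructor
  · rintro ⟨F, ⟨d, hF⟩, Heq, Hne⟩
    have hm2 : 2 ≤ m := by
      by_contra h
      have hm1 : m = 1 := by omega
      apply Hne
      rw [hm1, pow_one, StarAux.monStar_eq_symb_one]
    have hc2 : 2 ≤ c := by
      by_contra h
      have hc1 : c = 1 := by omega
      apply Hne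
      rw [hc1]
      exact StarAux.symb_one_eq_pow m
    by_contra hne22
    rcases Nat.lt_or_ge c 3 with h3 | h3
    · -- c = 2
      have hceq : c = 2 := by omega
      subst hceq
      have hm3 : 3 ≤ m := by
        rcases Nat.lt_or_ge m 3 with h | h
        · exact absurd ⟨rfl, by omega⟩ hne22
        · exact h
      have hn2 : 2 ≤ n := hcn
      set s0 : Fin (n+1) := ⟨0, by omega⟩ with hs0
      set s1 : Fin (n+1) := ⟨1, by omega⟩ with hs1
      have hs01 : s0 ≠ s1 := by
        rw [hs0, hs1]
        simp [Fin.ext_iff]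
      set μ1 : Fin (n+1) →₀ ℕ := Finsupp.equivFunOnFinite.symm (StarAux.fA m s0) with hμ1
      set μ2 : Fin (n+1) →₀ ℕ := Finsupp.equivFunOnFinite.symm (StarAux.fA m s1) with hμ2
      have hμ1i : ∀ i, μ1 i = StarAux.fA m s0 i := fun i => rfl
      have hμ2i : ∀ i, μ2 i = StarAux.fA m s1 i := fun i => rfl
      have hconv1 : ∀ S : Finset (Fin (n+1)), ∑ i ∈ S, μ1 i = ∑ i ∈ S, StarAux.fA m s0 i :=
        fun S => Finset.sum_congr rfl fun i _ => rfl
      have hconv2 : ∀ S : Finset (Fin (n+1)), ∑ i ∈ S, μ2 i = ∑ i ∈ S, StarAux.fA m s1 i :=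
        fun S => Finset.sum_congr rfl fun i _ => rfl
      refine StarAux.no_single_gen (by omega) hcn hF Heq μ1 μ2
        (fun S hS => by rw [hconv1]; exact StarAux.starA (by omega) s0 hS)
        (fun S hS => by rw [hconv2]; exact StarAux.starA (by omega) s1 hS)
        ?_ ?_ {s0, s1} ?_ ?_
      · rw [hconv1 Finset.univ]
        have h4 : n + 2 - 2 = n := by omega
        rw [h4]
        exact StarAux.degA (by omega) hn2 s0
      · rw [hconv2 Finset.univ]
        have h4 : n + 2 - 2 = n := by omega
        rw [h4]
        exact StarAux.degA (by omega) hn2 s1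
      · rw [Finset.card_insert_of_notMem (by simpa using hs01), Finset.card_singleton]
      · intro ν h1 h2
        rw [Finset.sum_pair hs01]
        have ha := h1 s0
        have hb := h2 s1
        rw [hμ1i] at ha
        rw [hμ2i] at hb
        unfold StarAux.fA at ha hb
        rw [if_pos rfl] at ha hb
        omega
    · -- 3 ≤ c
      classical
      set s1 : Fin (n+1) := ⟨c - 2, by omega⟩ with hs1
      set s2 : Fin (n+1) := ⟨0, by omega⟩ with hs2
      have hs1v : s1.val < c - 1 := by
        rw [hs1]
        show c - 2 < c - 1
        omega
      have hs2v : s2.val < c - 1 := by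
        rw [hs2]
        show 0 < c - 1
        omega
      set μ1 : Fin (n+1) →₀ ℕ := Finsupp.equivFunOnFinite.symm (StarAux.fB c m s1) with hμ1
      set μ2 : Fin (n+1) →₀ ℕ := Finsupp.equivFunOnFinite.symm (StarAux.fB c m s2) with hμ2
      have hμ1i : ∀ i, μ1 i = StarAux.fB c m s1 i := fun i => rfl
      have hμ2i : ∀ i, μ2 i = StarAux.fB c m s2 i := fun i => rfl
      have hconv1 : ∀ S : Finset (Fin (n+1)), ∑ i ∈ S, μ1 i = ∑ i ∈ S, StarAux.fB c m s1 i :=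
        fun S => Finset.sum_congr rfl fun i _ => rfl
      have hconv2 : ∀ S : Finset (Fin (n+1)), ∑ i ∈ S, μ2 i = ∑ i ∈ S, StarAux.fB c m s2 i :=
        fun S => Finset.sum_congr rfl fun i _ => rfl
      refine StarAux.no_single_gen (by omega) hcn hF Heq μ1 μ2
        (fun S hS => by rw [hconv1]; exact StarAux.starB hm2 h3 hs1v hS)
        (fun S hS => by rw [hconv2]; exact StarAux.starB hm2 h3 hs2v hS)
        (by rw [hconv1 Finset.univ]; exact StarAux.degB hm2 h3 hcn hs1v)
        (by rw [hconv2 Finset.univ]; exact StarAux.degB hm2 h3 hcn hs2v)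
        (Finset.univ.filter (fun i => i.val < c)) (StarAux.card_filter_val_lt c (by omega)) ?_
      intro ν h1 h2
      set w : Fin (n+1) := ⟨c - 1, by omega⟩ with hw
      have hbound : ∀ i ∈ Finset.univ.filter (fun i : Fin (n+1) => i.val < c),
          ν i ≤ (if i = w then m - 1 else 0) := by
        intro i hi
        rw [Finset.mem_filter] at hi
        by_cases hiw : i = w
        · rw [if_pos hiw]
          have ha := h1 i
          rw [hμ1i] at ha
          unfold StarAux.fB at ha
          have hiw1 : i ≠ s1 := by
            rw [hiw, hw, hs1]
            simp only [ne_eq, Fin.mk.injEq]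
            omega
          have hiw2 : ¬ i.val < c - 1 := by
            rw [hiw]
            show ¬ c - 1 < c - 1
            omega
          rw [if_neg hiw1, if_neg hiw2] at ha
          exact ha
        · rw [if_neg hiw]
          have hvlt : i.val < c - 1 := by
            have hne : i.val ≠ c - 1 := fun he => hiw (by rw [hw]; exact Fin.ext he)
            omega
          by_cases hi2 : i = s2
          · have ha := h1 i
            rw [hμ1i] at ha
            unfold StarAux.fB at ha
            have hi1 : i ≠ s1 := by
              rw [hi2, hs2, hs1]
              simp only [ne_eq, Fin.mk.injEq]
              omega
            rw [if_neg hi1, if_pos hvlt] at ha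
            exact ha
          · have ha := h2 i
            rw [hμ2i] at ha
            unfold StarAux.fB at ha
            rw [if_neg hi2, if_pos hvlt] at ha
            exact ha
      have hsum := Finset.sum_le_sum hbound
      have hsum2 : ∑ i ∈ Finset.univ.filter (fun i : Fin (n+1) => i.val < c),
          (if i = w then m - 1 else 0) = m - 1 := by
        rw [Finset.sum_ite_eq' _ w (fun _ => m - 1),
          if_pos (Finset.mem_filter.mpr ⟨Finset.mem_univ w, by show c - 1 < c; omega⟩)]
      rw [hsum2] at hsum
      omega
  · rintro ⟨rfl, rfl⟩
    exact StarAux.backward hcn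
end

section
/- Let F := F_1·F_2⋯F_s. Then the colon ideal satisfies (I_{2,F}^2 : F) = ⟨F_{i_1}⋯F_{i_{s−2}} : 1 ≤ i_1 < ⋯ < i_{s−2} ≤ s⟩, the ideal generated by all products of s−2 of the forms F_1,…,F_s. -/
section Aux


variable {R : Type*} [CommRing R]

/-- Cancel a regular element modulo an ideal. -/
lemma aux_reg_cancel (I : Ideal R) (c : R)
    (hc : IsSMulRegular (R ⧸ (I • ⊤ : Submodule R R)) c) {x : R} (h : x * c ∈ I) :
    x ∈ I := by
  have hIT : (I • ⊤ : Submodule R R) = I := by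
    apply le_antisymm
    · exact Submodule.smul_le.mpr fun r hr m _ => by
        simpa [smul_eq_mul] using I.mul_mem_right m hr
    · intro x hx
      simpa using Submodule.smul_mem_smul hx (Submodule.mem_top (R := R) (x := (1 : R)))
  have h0 : c • (Submodule.Quotient.mk x : R ⧸ (I • ⊤ : Submodule R R)) =
      c • (0 : R ⧸ (I • ⊤ : Submodule R R)) := by
    rw [smul_zero, ← Submodule.Quotient.mk_smul, Submodule.Quotient.mk_eq_zero, hIT,
      smul_eq_mul, mul_comm]
    exact h
  have := hc h0
  rwa [Submodule.Quotient.mk_eq_zero, hIT] at this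

lemma aux_reg3 {a b c : R} (h : RingTheory.Sequence.IsRegular R [a, b, c]) {x : R}
    (hx : x * c ∈ Ideal.span {a, b}) : x ∈ Ideal.span {a, b} := by
  have hr := h.toIsWeaklyRegular.regular_mod_prev 2 (by simp)
  have hof : Ideal.ofList [a, b] = Ideal.span {a, b} := by
    rw [Ideal.ofList_cons, Ideal.ofList_singleton, Ideal.span_insert]
  simp only [List.take, List.getElem_cons_succ, List.getElem_cons_zero] at hr
  exact aux_reg_cancel _ _ (by rw [← hof]; exact hr) hx

lemma aux_reg2 {a b : R} (h : RingTheory.Sequence.IsRegular R [a, b]) {x : R}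
    (hx : x * b ∈ Ideal.span {a}) : x ∈ Ideal.span {a} := by
  have hr := h.toIsWeaklyRegular.regular_mod_prev 1 (by simp)
  have hof : Ideal.ofList [a] = Ideal.span {a} := Ideal.ofList_singleton a
  simp only [List.take, List.getElem_cons_succ, List.getElem_cons_zero] at hr
  exact aux_reg_cancel _ _ (by rw [← hof]; exact hr) hx

lemma aux_reg1 [Nontrivial R] {a : R} (h : RingTheory.Sequence.IsRegular R [a]) : a ≠ 0 := by
  have hr := h.toIsWeaklyRegular
  rw [RingTheory.Sequence.isWeaklyRegular_cons_iff] at hr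
  intro h0
  have h1 : a • (1 : R) = a • (0 : R) := by simp [h0]
  exact one_ne_zero (hr.1 h1)

/-- Representation of an element of the span of a finite image. -/
lemma aux_repr {ι : Type*} [DecidableEq ι] (T : Finset ι) (v : ι → R) {g : R}
    (hg : g ∈ Ideal.span (v '' ↑T)) : ∃ c : ι → R, g = ∑ i ∈ T, c i * v i := by
  refine Submodule.span_induction ?_ ?_ ?_ ?_ hg
  · rintro x ⟨i, hi, rfl⟩
    refine ⟨fun j => if j = i then 1 else 0, ?_⟩
    have hc : ∀ j ∈ T, (if j = i then (1:R) else 0) * v j = if j = i then v j else 0 := by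
      intro j hj; split <;> simp
    rw [Finset.sum_congr rfl hc, Finset.sum_ite_eq' T i (fun j => v j)]
    simp only [Finset.mem_coe] at hi
    simp [hi]
  · exact ⟨0, by simp⟩
  · rintro x y hx hy ⟨c₁, rfl⟩ ⟨c₂, rfl⟩
    exact ⟨c₁ + c₂, by simp [add_mul, Finset.sum_add_distrib]⟩
  · rintro r x hx ⟨c, rfl⟩
    exact ⟨fun i => r * c i, by rw [smul_eq_mul, Finset.mul_sum]; simp [mul_assoc]⟩

/-- Cancel a product of regular elements modulo an ideal. -/
lemma aux_cancel_prod {ι : Type*} [DecidableEq ι] (P : Ideal R) (U : Finset ι) (f : ι → R)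
    (h : ∀ j ∈ U, ∀ x : R, x * f j ∈ P → x ∈ P) :
    ∀ x : R, x * ∏ j ∈ U, f j ∈ P → x ∈ P := by
  induction U using Finset.induction with
  | empty => intro x hx; simpa using hx
  | insert a U ha ih =>
    intro x hx
    rw [Finset.prod_insert ha] at hx
    have hx' : (x * ∏ j ∈ U, f j) * f a ∈ P := by
      rw [show (x * ∏ j ∈ U, f j) * f a = x * (f a * ∏ j ∈ U, f j) by ring]
      exact hx
    exact ih (fun j hj => h j (Finset.mem_insert_of_mem hj)) x
      (h a (Finset.mem_insert_self a U) _ hx')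

/-- The key induction: the intersection of the pair-ideals is contained in the
ideal generated by the products of all but one of the forms. -/
lemma aux_key {ι : Type*} [DecidableEq ι] (F : ι → R)
    (hreg3 : ∀ i j l : ι, i ≠ j → i ≠ l → j ≠ l →
      ∀ x : R, x * F l ∈ Ideal.span {F i, F j} → x ∈ Ideal.span {F i, F j}) :
    ∀ m : ℕ, ∀ T : Finset ι, T.card = m + 2 →
      ∀ g : R, (∀ S ⊆ T, S.card = 2 → g ∈ Ideal.span (F '' ↑S)) →
        g ∈ Ideal.span ((fun i => ∏ j ∈ T.erase i, F j) '' ↑T) := by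
  intro m
  induction m with
  | zero =>
    intro T hT g hg
    obtain ⟨a, b, hab, rfl⟩ := Finset.card_eq_two.mp hT
    have e1 : ({a, b} : Finset ι).erase a = {b} := Finset.erase_insert (by simp [hab])
    have e2 : ({a, b} : Finset ι).erase b = {a} := by
      ext x
      simp only [Finset.mem_erase, Finset.mem_insert, Finset.mem_singleton]
      constructor
      · rintro ⟨h1, h2 | h2⟩
        exacts [h2, absurd h2 h1]
      · rintro rfl; exact ⟨hab, Or.inl rfl⟩
    have hg2 := hg {a, b} le_rfl hT
    refine Ideal.span_le.mpr ?_ hg2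
    rintro x ⟨i, hi, rfl⟩
    apply Ideal.subset_span
    simp only [Finset.coe_insert, Set.mem_insert_iff, Finset.coe_singleton,
      Set.mem_singleton_iff] at hi
    rcases hi with rfl | rfl
    · exact ⟨b, by simp, by simp [e2]⟩
    · exact ⟨a, by simp, by simp [e1]⟩
  | succ m ih =>
    intro T hT g hg
    have hTne : T.Nonempty := Finset.card_pos.mp (by omega)
    obtain ⟨t, ht⟩ := hTne
    have hT' : (T.erase t).card = m + 2 := by
      rw [Finset.card_erase_of_mem ht, hT]; omega
    have hg' : g ∈ Ideal.span ((fun i => ∏ j ∈ (T.erase t).erase i, F j) '' ↑(T.erase t)) :=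
      ih (T.erase t) hT' g (fun S hS h2 => hg S (hS.trans (Finset.erase_subset t T)) h2)
    obtain ⟨c, hc⟩ := aux_repr (T.erase t) _ hg'
    have hci : ∀ i ∈ T.erase t, c i ∈ Ideal.span {F i, F t} := by
      intro i hi
      have hit : i ≠ t := (Finset.mem_erase.mp hi).1
      have hiT : i ∈ T := (Finset.mem_erase.mp hi).2
      have hpair : g ∈ Ideal.span {F i, F t} := by
        have hsub : ({i, t} : Finset ι) ⊆ T := by
          intro x hx
          rcases Finset.mem_insert.mp hx with rfl | hx
          · exact hiT
          · rw [Finset.mem_singleton.mp hx]; exact ht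
        have hcard2 : ({i, t} : Finset ι).card = 2 := by
          rw [Finset.card_insert_of_notMem (by simp [hit]), Finset.card_singleton]
        have := hg {i, t} hsub hcard2
        rwa [Finset.coe_insert, Finset.coe_singleton, Set.image_insert_eq,
          Set.image_singleton] at this
      have hterm : c i * ∏ j ∈ (T.erase t).erase i, F j ∈ Ideal.span {F i, F t} := by
        have hrest : ∑ i' ∈ (T.erase t).erase i, c i' * ∏ j ∈ (T.erase t).erase i', F j ∈
            Ideal.span {F i, F t} := by
          refine Ideal.sum_mem _ fun i' hi' => ?_
          have hii' : i' ≠ i := (Finset.mem_erase.mp hi').1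
          have hi'T' : i' ∈ T.erase t := (Finset.mem_erase.mp hi').2
          have hmem : i ∈ (T.erase t).erase i' :=
            Finset.mem_erase.mpr ⟨fun h => hii' h.symm, hi⟩
          rw [← Finset.mul_prod_erase _ _ hmem,
            show c i' * (F i * ∏ j ∈ ((T.erase t).erase i').erase i, F j) =
              (c i' * ∏ j ∈ ((T.erase t).erase i').erase i, F j) * F i by ring]
          exact Ideal.mul_mem_left _ _ (Ideal.subset_span (by simp))
        have heq : c i * ∏ j ∈ (T.erase t).erase i, F j =
            g - ∑ i' ∈ (T.erase t).erase i, c i' * ∏ j ∈ (T.erase t).erase i', F j := by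
          rw [hc, ← Finset.sum_erase_add (T.erase t) _ hi]; ring
        rw [heq]; exact Ideal.sub_mem _ hpair hrest
      refine aux_cancel_prod (Ideal.span {F i, F t}) ((T.erase t).erase i) F ?_ (c i) hterm
      intro j hj x hx
      have hji : j ≠ i := (Finset.mem_erase.mp hj).1
      have hjt : j ≠ t := (Finset.mem_erase.mp (Finset.mem_erase.mp hj).2).1
      exact hreg3 i t j hit (fun h => hji h.symm) (fun h => hjt h.symm) x hx
    have hex : ∀ i, ∃ ab : R × R, i ∈ T.erase t → ab.1 * F i + ab.2 * F t = c i := by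
      intro i
      by_cases hi : i ∈ T.erase t
      · obtain ⟨u, w, huw⟩ := Ideal.mem_span_pair.mp (hci i hi)
        exact ⟨(u, w), fun _ => huw⟩
      · exact ⟨(0, 0), fun h => absurd h hi⟩
    choose ab hab using hex
    have hgeq : g = ∑ i ∈ T.erase t,
        ((ab i).1 * ∏ j ∈ T.erase t, F j + (ab i).2 * ∏ j ∈ T.erase i, F j) := by
      rw [hc]
      refine Finset.sum_congr rfl fun i hi => ?_
      have hit : i ≠ t := (Finset.mem_erase.mp hi).1
      have h1 : F i * ∏ j ∈ (T.erase t).erase i, F j = ∏ j ∈ T.erase t, F j :=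
        Finset.mul_prod_erase (T.erase t) F hi
      have h2 : F t * ∏ j ∈ (T.erase t).erase i, F j = ∏ j ∈ T.erase i, F j := by
        have htm : t ∈ T.erase i := Finset.mem_erase.mpr ⟨fun h => hit h.symm, ht⟩
        rw [Finset.erase_right_comm, Finset.mul_prod_erase _ F htm]
      rw [← hab i hi, add_mul, mul_assoc, mul_assoc, h1, h2]
    rw [hgeq]
    refine Ideal.sum_mem _ fun i hi => Ideal.add_mem _ ?_ ?_
    · exact Ideal.mul_mem_left _ _ (Ideal.subset_span ⟨t, by simpa using ht, rfl⟩)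
    · exact Ideal.mul_mem_left _ _
        (Ideal.subset_span ⟨i, by simpa using (Finset.mem_erase.mp hi).2, rfl⟩)

end Aux



open MvPolynomial

/-- The star configuration ideal `I_{e,F} = ⋂_{|S| = e} ⟨F_i : i ∈ S⟩`. -/
noncomputable def starIdeal {k : Type*} [Field k] {n s : ℕ}
    (F : Fin s → MvPolynomial (Fin (n + 1)) k) (e : ℕ) :
    Ideal (MvPolynomial (Fin (n + 1)) k) :=
  ⨅ (S : Finset (Fin s)) (_ : S.card = e), Ideal.span (F '' ↑S)

/-- The `m`-th symbolic power `I_{e,F}^{(m)} = ⋂_{|S| = e} ⟨F_i : i ∈ S⟩^m`. -/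
noncomputable def starSymb {k : Type*} [Field k] {n s : ℕ}
    (F : Fin s → MvPolynomial (Fin (n + 1)) k) (e m : ℕ) :
    Ideal (MvPolynomial (Fin (n + 1)) k) :=
  ⨅ (S : Finset (Fin s)) (_ : S.card = e), (Ideal.span (F '' ↑S)) ^ m

theorem star_colon_ideal (k : Type*) [Field k] (n s : ℕ) (hs : 3 ≤ s)
    (F : Fin s → MvPolynomial (Fin (n + 1)) k)
    (hF : ∀ i, ∃ d, 0 < d ∧ (F i).IsHomogeneous d)
    (hreg : ∀ L : List (Fin s), L.Nodup → L.length ≤ 3 →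
      RingTheory.Sequence.IsRegular (MvPolynomial (Fin (n + 1)) k) (L.map F)) :
    Submodule.colon (starIdeal F 2 ^ 2) (Ideal.span {∏ i, F i}) =
      Ideal.span {p : MvPolynomial (Fin (n + 1)) k |
        ∃ S : Finset (Fin s), S.card = s - 2 ∧ p = ∏ i ∈ S, F i} := by
  classical
  have hreg3 : ∀ i j l : Fin s, i ≠ j → i ≠ l → j ≠ l →
      ∀ x, x * F l ∈ Ideal.span {F i, F j} → x ∈ Ideal.span {F i, F j} := by
    intro i j l hij hil hjl x hx
    have h := hreg [i, j, l] (by simp [hij, hil, hjl]) (by simp)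
    simp only [List.map_cons, List.map_nil] at h
    exact aux_reg3 h hx
  have hreg2 : ∀ i j : Fin s, i ≠ j →
      ∀ x, x * F j ∈ Ideal.span {F i} → x ∈ Ideal.span {F i} := by
    intro i j hij x hx
    have h := hreg [i, j] (by simp [hij]) (by simp)
    simp only [List.map_cons, List.map_nil] at h
    exact aux_reg2 h hx
  have hFne : ∀ i, F i ≠ 0 := by
    intro i
    have h := hreg [i] (by simp) (by simp)
    simp only [List.map_cons, List.map_nil] at h
    exact aux_reg1 h
  set v : Fin s → MvPolynomial (Fin (n + 1)) k :=
    fun i => ∏ j ∈ Finset.univ.erase i, F j with hv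
  have hprodF : ∀ i : Fin s, F i * v i = ∏ j, F j :=
    fun i => Finset.mul_prod_erase _ F (Finset.mem_univ i)
  set J := Ideal.span {p : MvPolynomial (Fin (n + 1)) k |
    ∃ S : Finset (Fin s), S.card = s - 2 ∧ p = ∏ i ∈ S, F i} with hJ
  have hWJ : ∀ i j : Fin s, i ≠ j →
      ∏ l ∈ (Finset.univ.erase i).erase j, F l ∈ J := by
    intro i j hij
    apply Ideal.subset_span
    refine ⟨(Finset.univ.erase i).erase j, ?_, rfl⟩
    rw [Finset.card_erase_of_mem
        (Finset.mem_erase.mpr ⟨fun h => hij h.symm, Finset.mem_univ j⟩),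
      Finset.card_erase_of_mem (Finset.mem_univ i), Finset.card_univ, Fintype.card_fin]
    omega
  have hvJ : ∀ i : Fin s, v i ∈ J := by
    intro i
    have h2 : ∃ j : Fin s, j ≠ i := by
      refine Fintype.exists_ne_of_one_lt_card ?_ i
      rw [Fintype.card_fin]; omega
    obtain ⟨j, hji⟩ := h2
    have hvi : v i = F j * ∏ l ∈ (Finset.univ.erase i).erase j, F l :=
      (Finset.mul_prod_erase _ F (Finset.mem_erase.mpr ⟨hji, Finset.mem_univ j⟩)).symm
    rw [hvi]
    exact Ideal.mul_mem_left _ _ (hWJ i j (fun h => hji h.symm))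
  have hvmul : ∀ i j : Fin s, i ≠ j →
      v i * v j = (∏ l, F l) * ∏ l ∈ (Finset.univ.erase i).erase j, F l := by
    intro i j hij
    have h1 : v i = F j * ∏ l ∈ (Finset.univ.erase i).erase j, F l :=
      (Finset.mul_prod_erase _ F
        (Finset.mem_erase.mpr ⟨fun h => hij h.symm, Finset.mem_univ j⟩)).symm
    rw [h1, ← hprodF j]; ring
  have hvI : ∀ i, v i ∈ starIdeal F 2 := by
    intro i
    rw [starIdeal, Ideal.mem_iInf]
    intro S
    rw [Ideal.mem_iInf]
    intro hS
    obtain ⟨x, y, hxy, rfl⟩ := Finset.card_eq_two.mp hS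
    rcases ne_or_eq x i with hxi | rfl
    · have hvi : v i = F x * ∏ l ∈ (Finset.univ.erase i).erase x, F l :=
        (Finset.mul_prod_erase _ F (Finset.mem_erase.mpr ⟨hxi, Finset.mem_univ x⟩)).symm
      rw [hvi]
      exact Ideal.mul_mem_right _ _ (Ideal.subset_span ⟨x, by simp, rfl⟩)
    · have hyi : y ≠ x := fun h => hxy h.symm
      have hvi : v x = F y * ∏ l ∈ (Finset.univ.erase x).erase y, F l :=
        (Finset.mul_prod_erase _ F (Finset.mem_erase.mpr ⟨hyi, Finset.mem_univ y⟩)).symm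
      rw [hvi]
      exact Ideal.mul_mem_right _ _ (Ideal.subset_span ⟨y, by simp, rfl⟩)
  apply le_antisymm
  · -- hard direction
    intro g hg
    have hgF : g * ∏ l, F l ∈ starIdeal F 2 ^ 2 := by
      have := Submodule.mem_colon.mp hg (∏ l, F l) (Ideal.subset_span rfl)
      simpa [smul_eq_mul] using this
    have hkey : starIdeal F 2 ≤ Ideal.span (v '' ↑(Finset.univ : Finset (Fin s))) := by
      intro x hx
      refine aux_key F hreg3 (s - 2) Finset.univ ?_ x ?_
      · rw [Finset.card_univ, Fintype.card_fin]; omega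
      · intro S _ h2
        rw [starIdeal, Ideal.mem_iInf] at hx
        have := hx S
        rw [Ideal.mem_iInf] at this
        exact this h2
    have hsq : starIdeal F 2 ^ 2 ≤ Ideal.span
        ((fun p : Fin s × Fin s => v p.1 * v p.2) ''
          ↑(Finset.univ : Finset (Fin s × Fin s))) := by
      rw [pow_two]
      refine le_trans (Ideal.mul_mono hkey hkey) ?_
      rw [Ideal.span_mul_span]
      refine Ideal.span_le.mpr ?_
      rintro x hx
      simp only [Set.mem_iUnion, Set.mem_singleton_iff, Set.mem_image, Finset.coe_univ,
        Set.mem_univ, true_and] at hx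
      obtain ⟨a, ⟨i, -, rfl⟩, b, ⟨j, -, rfl⟩, rfl⟩ := hx
      exact Ideal.subset_span ⟨(i, j), by simp, rfl⟩
    obtain ⟨c, hcrep⟩ := aux_repr Finset.univ
      (fun p : Fin s × Fin s => v p.1 * v p.2) (hsq hgF)
    have hsplit : g * ∏ l, F l = (∑ i : Fin s, c (i, i) * (v i * v i)) +
        ∑ p ∈ Finset.univ.offDiag, c p * (v p.1 * v p.2) := by
      rw [hcrep, ← Finset.univ_product_univ, ← Finset.diag_union_offDiag,
        Finset.sum_union (Finset.disjoint_diag_offDiag _), Finset.sum_diag]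
    have hoff : ∑ p ∈ Finset.univ.offDiag, c p * (v p.1 * v p.2) =
        (∑ p ∈ Finset.univ.offDiag,
          c p * ∏ l ∈ (Finset.univ.erase p.1).erase p.2, F l) * ∏ l, F l := by
      rw [Finset.sum_mul]
      refine Finset.sum_congr rfl fun p hp => ?_
      have hne : p.1 ≠ p.2 := (Finset.mem_offDiag.mp hp).2.2
      rw [hvmul p.1 p.2 hne]; ring
    set g₂ := g - ∑ p ∈ Finset.univ.offDiag,
      c p * ∏ l ∈ (Finset.univ.erase p.1).erase p.2, F l with hg₂
    have hdiag : g₂ * ∏ l, F l = ∑ i : Fin s, c (i, i) * (v i * v i) := by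
      rw [hoff] at hsplit
      rw [hg₂]
      linear_combination hsplit
    have hdiv : ∀ i : Fin s, ∃ e, c (i, i) = F i * e := by
      intro i
      have hmemi : c (i, i) * (v i * v i) ∈ Ideal.span {F i} := by
        have h1 : g₂ * ∏ l, F l ∈ Ideal.span {F i} :=
          Ideal.mem_span_singleton.mpr
            (Dvd.dvd.mul_left (Finset.dvd_prod_of_mem F (Finset.mem_univ i)) g₂)
        have h2 : ∑ i' ∈ Finset.univ.erase i, c (i', i') * (v i' * v i') ∈
            Ideal.span {F i} := by
          refine Ideal.sum_mem _ fun i' hi' => ?_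
          have hdvd : F i ∣ v i' :=
            Finset.dvd_prod_of_mem F
              (Finset.mem_erase.mpr
                ⟨fun h => (Finset.mem_erase.mp hi').1 h.symm, Finset.mem_univ i⟩)
          exact Ideal.mem_span_singleton.mpr ((hdvd.mul_right (v i')).mul_left _)
        have heq : c (i, i) * (v i * v i) = g₂ * (∏ l, F l) -
            ∑ i' ∈ Finset.univ.erase i, c (i', i') * (v i' * v i') := by
          rw [hdiag, ← Finset.sum_erase_add Finset.univ _ (Finset.mem_univ i)]; ring
        rw [heq]
        exact Ideal.sub_mem _ h1 h2
      have hcan : ∀ x, x * v i ∈ Ideal.span {F i} → x ∈ Ideal.span {F i} := by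
        intro x hx
        refine aux_cancel_prod _ (Finset.univ.erase i) F ?_ x hx
        intro j hj y hy
        exact hreg2 i j (fun h => (Finset.mem_erase.mp hj).1 h.symm) y hy
      have step1 : c (i, i) * v i ∈ Ideal.span {F i} := by
        refine hcan _ ?_
        rw [mul_assoc]; exact hmemi
      have step2 : c (i, i) ∈ Ideal.span {F i} := hcan _ step1
      exact Ideal.mem_span_singleton.mp step2
    choose e he using hdiv
    have hfinal : (g₂ - ∑ i : Fin s, e i * v i) * ∏ l, F l = 0 := by
      rw [sub_mul, hdiag, Finset.sum_mul, sub_eq_zero]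
      refine Finset.sum_congr rfl fun i _ => ?_
      rw [he i, ← hprodF i]; ring
    have hFprod_ne : (∏ l, F l) ≠ 0 :=
      Finset.prod_ne_zero_iff.mpr fun i _ => hFne i
    have hg₂eq : g₂ = ∑ i : Fin s, e i * v i := by
      rcases mul_eq_zero.mp hfinal with h | h
      · exact sub_eq_zero.mp h
      · exact absurd h hFprod_ne
    have hgfin : g = (∑ p ∈ Finset.univ.offDiag,
        c p * ∏ l ∈ (Finset.univ.erase p.1).erase p.2, F l) + ∑ i : Fin s, e i * v i := by
      rw [← hg₂eq, hg₂]; ring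
    rw [hgfin]
    refine Ideal.add_mem _ ?_ ?_
    · exact Ideal.sum_mem _ fun p hp =>
        Ideal.mul_mem_left _ _ (hWJ p.1 p.2 (Finset.mem_offDiag.mp hp).2.2)
    · exact Ideal.sum_mem _ fun i _ => Ideal.mul_mem_left _ _ (hvJ i)
  · -- easy direction
    refine Ideal.span_le.mpr ?_
    rintro p ⟨S, hScard, rfl⟩
    rw [SetLike.mem_coe, Submodule.mem_colon]
    intro q hq
    obtain ⟨r, rfl⟩ := Ideal.mem_span_singleton'.mp hq
    have hcompl : Sᶜ.card = 2 := by
      rw [Finset.card_compl, hScard, Fintype.card_fin]; omega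
    obtain ⟨a, b, hab, hSc⟩ := Finset.card_eq_two.mp hcompl
    have hSeq : S = (Finset.univ.erase a).erase b := by
      have h0 : S = Sᶜᶜ := (compl_compl S).symm
      rw [h0, hSc]
      ext x
      simp only [Finset.mem_compl, Finset.mem_erase, Finset.mem_insert,
        Finset.mem_singleton, Finset.mem_univ, and_true]
      tauto
    have hva : v a = F b * ∏ l ∈ S, F l := by
      rw [hSeq]
      exact (Finset.mul_prod_erase _ F
        (Finset.mem_erase.mpr ⟨fun h => hab h.symm, Finset.mem_univ b⟩)).symm
    have hvb : v b = F a * ∏ l ∈ S, F l := by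
      rw [hSeq, Finset.erase_right_comm]
      exact (Finset.mul_prod_erase _ F
        (Finset.mem_erase.mpr ⟨hab, Finset.mem_univ a⟩)).symm
    have hident : (∏ i ∈ S, F i) * (∏ l, F l) = v a * v b := by
      rw [hva, hvb, ← hprodF a, hva]; ring
    rw [smul_eq_mul, show (∏ i ∈ S, F i) * (r * ∏ l, F l) =
      r * ((∏ i ∈ S, F i) * ∏ l, F l) by ring, hident]
    refine Ideal.mul_mem_left _ _ ?_
    rw [pow_two]
    exact Ideal.mul_mem_mul (hvI a) (hvI b)
end

section
/- Let P be a prime ideal of R of height 2 with I_{2,F} ⊆ P. Then there exists a unique pair of indices 1 ≤ i < j ≤ s such that F_i ∈ P and F_j ∈ P (equivalently, ⟨F_i,F_j⟩ ⊆ P). -/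
open MvPolynomial

section Aux

variable {A : Type*} [CommRing A]

lemma aux_extract (y : A) : ∀ (m : ℕ) (c : A), c ≠ 0 → c * y ^ m = 0 →
    ∃ z, z ≠ 0 ∧ y * z = 0 := by
  intro m
  induction m with
  | zero => intro c hc h; rw [pow_zero, mul_one] at h; exact absurd h hc
  | succ m ih =>
    intro c hc h
    by_cases h' : c * y ^ m = 0
    · exact ih c hc h'
    · exact ⟨c * y ^ m, h', by rw [← h]; ring⟩

/-- Every element of a minimal prime is a zerodivisor. -/
lemma aux_zero_divisor {q : Ideal A} (hq : q ∈ minimalPrimes A) {y : A} (hy : y ∈ q) :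
    ∃ z : A, z ≠ 0 ∧ y * z = 0 := by
  haveI hqp : q.IsPrime := hq.1.1
  set L := Localization q.primeCompl
  have hmem : algebraMap A L y ∈ IsLocalRing.maximalIdeal L :=
    (IsLocalization.AtPrime.to_map_mem_maximal_iff L q y).mpr hy
  have hnil : IsNilpotent (algebraMap A L y) :=
    (by have : Ring.KrullDimLE 0 L := .of_isLocalization q hq L
        exact Ring.KrullDimLE.isNilpotent_iff_mem_maximalIdeal.mpr hmem)
  obtain ⟨m, hm⟩ := hnil
  rw [← map_pow] at hm
  obtain ⟨c, hc⟩ := (IsLocalization.map_eq_zero_iff q.primeCompl L _).mp hm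
  have hc0 : (c : A) ≠ 0 := fun h => c.2 (h ▸ q.zero_mem)
  exact aux_extract y m c hc0 hc

/-- If `x` is regular on `A ⧸ I`, then `x` does not lie in any minimal prime over `I`. -/
lemma aux_not_mem_minimal {I p : Ideal A} (hp : p ∈ I.minimalPrimes)
    {x : A} (hx : IsSMulRegular (A ⧸ (I • ⊤ : Submodule A A)) x) : x ∉ p := by
  intro hxp
  have e : (I • ⊤ : Submodule A A) = I := by
    rw [smul_eq_mul, Ideal.mul_top]
  rw [e] at hx
  rw [Ideal.minimalPrimes_eq_comap] at hp
  obtain ⟨q, hq, rfl⟩ := hp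
  have hyq : Ideal.Quotient.mk I x ∈ q := hxp
  obtain ⟨z, hz0, hz⟩ := aux_zero_divisor hq hyq
  obtain ⟨w, rfl⟩ := Ideal.Quotient.mk_surjective z
  apply hz0
  have h1 : x • (Ideal.Quotient.mk I w) = x • (0 : A ⧸ I) := by
    rw [smul_zero]
    show Ideal.Quotient.mk I (x * w) = 0
    rw [map_mul]; exact hz
  exact hx h1

end Aux

set_option maxHeartbeats 1000000 in
theorem star_height_two_prime_unique_pair (k : Type*) [Field k] (n s : ℕ) (hs : 2 ≤ s)
    (F : Fin s → MvPolynomial (Fin (n + 1)) k)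
    (hF : ∀ i, ∃ d, 0 < d ∧ (F i).IsHomogeneous d)
    (hreg : ∀ L : List (Fin s), L.Nodup → L.length ≤ 3 →
      RingTheory.Sequence.IsRegular (MvPolynomial (Fin (n + 1)) k) (L.map F))
    (P : Ideal (MvPolynomial (Fin (n + 1)) k)) (hP : P.IsPrime)
    (hht : Order.height (⟨P, hP⟩ : PrimeSpectrum (MvPolynomial (Fin (n + 1)) k)) = 2)
    (hIP : starIdeal F 2 ≤ P) :
    ∃! ij : Fin s × Fin s, ij.1 < ij.2 ∧ F ij.1 ∈ P ∧ F ij.2 ∈ P := by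
  classical
  -- Key: there are no three distinct indices whose polynomials all lie in P.
  have key : ∀ a b c : Fin s, a ≠ b → a ≠ c → b ≠ c →
      F a ∈ P → F b ∈ P → F c ∈ P → False := by
    intro a b c hab hac hbc ha hb hc
    have hnd : ([a, b, c] : List (Fin s)).Nodup := by simp [hab, hac, hbc]
    have hr := (hreg [a, b, c] hnd (by simp)).toIsWeaklyRegular
    have r0 := hr.regular_mod_prev 0 (by simp)
    have r1 := hr.regular_mod_prev 1 (by simp)
    have r2 := hr.regular_mod_prev 2 (by simp)
    simp only [List.map_cons, List.map_nil, List.take_succ_cons, List.take_zero,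
      List.getElem_cons_zero, List.getElem_cons_succ] at r0 r1 r2
    -- `F a ≠ 0`
    have ha0 : F a ≠ 0 := by
      intro h0
      rw [h0] at r0
      have hsub : Subsingleton (MvPolynomial (Fin (n + 1)) k ⧸ (Ideal.ofList ([] : List (MvPolynomial (Fin (n + 1)) k)) • ⊤ : Submodule (MvPolynomial (Fin (n + 1)) k) (MvPolynomial (Fin (n + 1)) k))) :=
        r0.subsingleton
      have e : (Ideal.ofList ([] : List (MvPolynomial (Fin (n + 1)) k)) • ⊤ : Submodule (MvPolynomial (Fin (n + 1)) k) (MvPolynomial (Fin (n + 1)) k)) = ⊥ := by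
        rw [Ideal.ofList_nil, smul_eq_mul, Ideal.bot_mul]
      rw [e] at hsub
      haveI : Nontrivial (MvPolynomial (Fin (n + 1)) k ⧸ (⊥ : Submodule (MvPolynomial (Fin (n + 1)) k) (MvPolynomial (Fin (n + 1)) k))) :=
        Submodule.Quotient.nontrivial_iff.mpr bot_ne_top
      exact not_subsingleton _ hsub
    -- minimal primes giving a chain
    have hP2le : Ideal.ofList [F a, F b] ≤ P := by
      apply Ideal.span_le.mpr
      intro r hr'
      simp only [Set.mem_setOf_eq, List.mem_cons, List.not_mem_nil, or_false] at hr'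
      rcases hr' with rfl | rfl
      exacts [ha, hb]
    obtain ⟨p2, hp2, hp2le⟩ := Ideal.exists_minimalPrimes_le hP2le
    haveI hp2prime : p2.IsPrime := hp2.1.1
    have hFa_p2 : F a ∈ p2 := hp2.1.2 (Ideal.subset_span (by simp))
    have hFb_p2 : F b ∈ p2 := hp2.1.2 (Ideal.subset_span (by simp))
    have hP1le : Ideal.ofList [F a] ≤ p2 := by
      apply Ideal.span_le.mpr
      intro r hr'
      simp only [Set.mem_setOf_eq, List.mem_cons, List.not_mem_nil, or_false] at hr'
      rcases hr' with rfl
      exact hFa_p2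
    obtain ⟨p1, hp1, hp1le⟩ := Ideal.exists_minimalPrimes_le hP1le
    haveI hp1prime : p1.IsPrime := hp1.1.1
    have hFa_p1 : F a ∈ p1 := hp1.1.2 (Ideal.subset_span (by simp))
    have hFb_not : F b ∉ p1 := aux_not_mem_minimal hp1 r1
    have hFc_not : F c ∉ p2 := aux_not_mem_minimal hp2 r2
    have hbot1 : (⊥ : Ideal (MvPolynomial (Fin (n + 1)) k)) < p1 := by
      refine bot_lt_iff_ne_bot.mpr fun h => ha0 ?_
      rw [h] at hFa_p1
      simpa using hFa_p1
    have h12 : p1 < p2 := hp1le.lt_of_ne fun h => hFb_not (h ▸ hFb_p2)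
    have h2P : p2 < P := hp2le.lt_of_ne fun h => hFc_not (h.symm ▸ hc)
    -- build a chain of length 3 in the prime spectrum
    let X0 : PrimeSpectrum (MvPolynomial (Fin (n + 1)) k) := ⟨⊥, Ideal.bot_prime⟩
    let X1 : PrimeSpectrum (MvPolynomial (Fin (n + 1)) k) := ⟨p1, hp1prime⟩
    let X2 : PrimeSpectrum (MvPolynomial (Fin (n + 1)) k) := ⟨p2, hp2prime⟩
    let X3 : PrimeSpectrum (MvPolynomial (Fin (n + 1)) k) := ⟨P, hP⟩
    let ch : LTSeries (PrimeSpectrum (MvPolynomial (Fin (n + 1)) k)) :=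
      ⟨3, ![X0, X1, X2, X3], by
        intro i
        fin_cases i
        · exact hbot1
        · exact h12
        · exact h2P⟩
    have hlast : ch.last = ⟨P, hP⟩ := rfl
    have h3 := Order.length_le_height (x := (⟨P, hP⟩ : PrimeSpectrum (MvPolynomial (Fin (n + 1)) k))) hlast.le
    rw [hht] at h3
    have h3' : ((3 : ℕ) : ℕ∞) ≤ 2 := h3
    norm_num at h3'
  -- Existence of a pair
  have hinf : (Finset.univ.filter (fun S : Finset (Fin s) => S.card = 2)).inf
      (fun S => Ideal.span (F '' ↑S)) ≤ P := by
    refine le_trans ?_ hIP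
    refine le_iInf fun S => le_iInf fun hS => Finset.inf_le ?_
    simp [hS]
  obtain ⟨S, hSmem, hSP⟩ := (hP.inf_le').mp hinf
  rw [Finset.mem_filter] at hSmem
  obtain ⟨i, j, hij, rfl⟩ := Finset.card_eq_two.mp hSmem.2
  have hFi : F i ∈ P := hSP (Ideal.subset_span ⟨i, by simp, rfl⟩)
  have hFj : F j ∈ P := hSP (Ideal.subset_span ⟨j, by simp, rfl⟩)
  -- WLOG `i < j`
  obtain ⟨u, v, huv, hFu, hFv⟩ : ∃ u v : Fin s, u < v ∧ F u ∈ P ∧ F v ∈ P := by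
    rcases hij.lt_or_gt with h | h
    · exact ⟨i, j, h, hFi, hFj⟩
    · exact ⟨j, i, h, hFj, hFi⟩
  refine ⟨(u, v), ⟨huv, hFu, hFv⟩, ?_⟩
  rintro ⟨a, b⟩ ⟨hab, hFa, hFb⟩
  have hcase : a = u ∧ b = v := by
    by_cases h1 : a = u
    · subst h1
      by_cases h2 : b = v
      · exact ⟨rfl, h2⟩
      · exact (key a b v hab.ne huv.ne h2 hFa hFb hFv).elim
    · by_cases h3 : a = v
      · subst h3
        exact (key u a b (fun h => h1 h.symm) (huv.trans hab).ne hab.ne hFu hFa hFb).elim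
      · exact (key a u v h1 h3 huv.ne hFa hFu hFv).elim
  simp [Prod.ext_iff, hcase.1, hcase.2]
end
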